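/- arXiv:1904.01452 — 4 statements merged into one kernel-verified Lean document; each statement's English description precedes it below -/
import Mathlib

section
/- If S ⊆ E(Γ) is a set of edges such that the spanning subgraph (V(Γ), S) contains a cycle, then the monomial G_S = ∧_{e∈S} G_e (the exterior product of the generators of all edges of S, taken in a fixed linear order on E(Γ)) lies in the ideal I(Γ). -/
/-!
Statement 2. If `S ⊆ E(Γ)` is a set of edges such that the spanning subgraph `(V(Γ), S)`
contains a cycle, then the monomial `G_S` (the ordered exterior product of the generators
of the edges of `S`) lies in the ideal `I(Γ)` generated by the boundaries of cycles.
-/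

noncomputable section

open scoped Classical

/-- The exterior algebra `Λ(Γ)` on the edges of a simple graph `Γ`. -/
abbrev GraphExt (k : Type) [CommRing k] {V : Type} (Γ : SimpleGraph V) : Type :=
  ExteriorAlgebra k (↥Γ.edgeSet → k)

/-- The generator `G_e` of `Λ(Γ)` corresponding to an edge `e` of `Γ`. -/
def gen (k : Type) [CommRing k] {V : Type} [DecidableEq V] (Γ : SimpleGraph V)
    (e : ↥Γ.edgeSet) : GraphExt k Γ :=
  ExteriorAlgebra.ι k (Pi.single e 1)

/-- The edge `{v_i, v_{i+1}}` of a cycle `v` (indices mod the length). -/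
def cycEdge {V : Type} (Γ : SimpleGraph V) {m : ℕ} (v : Fin (m + 3) → V)
    (h : ∀ i : Fin (m + 3), s(v i, v (i + 1)) ∈ Γ.edgeSet) (i : Fin (m + 3)) : ↥Γ.edgeSet :=
  ⟨s(v i, v (i + 1)), h i⟩

/-- `δ(s(v)) = Σ_j (−1)^j ⋅ (s(v) with its j-th exterior factor omitted)` (0-indexed). -/
def cycBoundary (k : Type) [CommRing k] {V : Type} [DecidableEq V] (Γ : SimpleGraph V) {m : ℕ}
    (v : Fin (m + 3) → V) (h : ∀ i : Fin (m + 3), s(v i, v (i + 1)) ∈ Γ.edgeSet) :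
    GraphExt k Γ :=
  ∑ j : Fin (m + 3),
    ((-1 : k) ^ (j : ℕ)) • ((List.ofFn fun i => gen k Γ (cycEdge Γ v h i)).eraseIdx j).prod

/-- The two-sided ideal `I(Γ)` of `Λ(Γ)` generated by the boundaries `δ(s(v))` of all
cycles `v` of `Γ` of length `≥ 3`. -/
def cycIdeal (k : Type) [CommRing k] {V : Type} [DecidableEq V] (Γ : SimpleGraph V) :
    Submodule k (GraphExt k Γ) :=
  Submodule.span k
    {z | ∃ (m : ℕ) (v : Fin (m + 3) → V)
        (h : ∀ i : Fin (m + 3), s(v i, v (i + 1)) ∈ Γ.edgeSet),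
      Function.Injective v ∧ ∃ p q : GraphExt k Γ, z = p * cycBoundary k Γ v h * q}

/-- `G_S`: the exterior product of the generators of the edges of `S`, taken in the fixed
linear order on the edges. -/
def edgeMonomial (k : Type) [CommRing k] {V : Type} [DecidableEq V] (Γ : SimpleGraph V)
    [LinearOrder ↥Γ.edgeSet] (S : Finset ↥Γ.edgeSet) : GraphExt k Γ :=
  (List.ofFn fun j : Fin S.card => gen k Γ (S.orderIsoOfFin rfl j : ↥Γ.edgeSet)).prod

/-- The spanning subgraph `(V(Γ), S)` contains a cycle: there is a cycle of `Γ` of length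
`≥ 3` all of whose edges belong to `S`. -/
def HasCycleIn {V : Type} (Γ : SimpleGraph V) (S : Finset ↥Γ.edgeSet) : Prop :=
  ∃ (m : ℕ) (v : Fin (m + 3) → V)
    (h : ∀ i : Fin (m + 3), s(v i, v (i + 1)) ∈ Γ.edgeSet),
    Function.Injective v ∧ ∀ i, cycEdge Γ v h i ∈ S

/-- Auxiliary: products of generator lists over permuted lists agree up to sign. -/
lemma prod_perm_sign (k : Type) [CommRing k] {V : Type} [DecidableEq V] (Γ : SimpleGraph V)
    {l l' : List ↥Γ.edgeSet} (h : l.Perm l') :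
    (l.map (gen k Γ)).prod = (l'.map (gen k Γ)).prod ∨
      (l.map (gen k Γ)).prod = -(l'.map (gen k Γ)).prod := by
  induction h with
  | nil => exact Or.inl rfl
  | cons a _ ih =>
    rcases ih with h | h
    · exact Or.inl (by simp only [List.map_cons, List.prod_cons, h])
    · exact Or.inr (by simp only [List.map_cons, List.prod_cons, h, mul_neg])
  | swap a b l =>
    refine Or.inr ?_
    simp only [List.map_cons, List.prod_cons, ← mul_assoc]
    have hab : gen k Γ b * gen k Γ a = -(gen k Γ a * gen k Γ b) := by
      unfold gen
      exact eq_neg_of_add_eq_zero_left (ExteriorAlgebra.ι_add_mul_swap _ _)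
    rw [hab, neg_mul]
  | trans _ _ ih1 ih2 =>
    rcases ih1 with h1 | h1 <;> rcases ih2 with h2 | h2
    · exact Or.inl (h1.trans h2)
    · exact Or.inr (by rw [h1, h2])
    · exact Or.inr (by rw [h1, h2])
    · exact Or.inl (by rw [h1, h2, neg_neg])

lemma gen_mul_cycBoundary (k : Type) [CommRing k] {V : Type} [DecidableEq V]
    (Γ : SimpleGraph V) {m : ℕ} (v : Fin (m + 3) → V)
    (h : ∀ i : Fin (m + 3), s(v i, v (i + 1)) ∈ Γ.edgeSet) :
    gen k Γ (cycEdge Γ v h 0) * cycBoundary k Γ v h =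
      (List.ofFn fun i => gen k Γ (cycEdge Γ v h i)).prod := by
  unfold cycBoundary
  rw [Finset.mul_sum, Fin.sum_univ_succ]
  have hL : (List.ofFn fun i => gen k Γ (cycEdge Γ v h i)) =
      gen k Γ (cycEdge Γ v h 0) ::
        List.ofFn (fun i : Fin (m + 2) => gen k Γ (cycEdge Γ v h i.succ)) := by
    rw [List.ofFn_succ]
  have h0 : ((-1 : k) ^ ((0 : Fin (m+3)) : ℕ)) = 1 := by norm_num
  have htail : ∀ j : Fin (m + 2),
      gen k Γ (cycEdge Γ v h 0) *
        (((-1 : k) ^ ((j.succ : Fin (m+3)) : ℕ)) •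
          ((List.ofFn fun i => gen k Γ (cycEdge Γ v h i)).eraseIdx j.succ).prod) = 0 := by
    intro j
    rw [hL]
    have : ((gen k Γ (cycEdge Γ v h 0) ::
        List.ofFn (fun i : Fin (m + 2) => gen k Γ (cycEdge Γ v h i.succ))).eraseIdx
          ((j.succ : Fin (m+3)) : ℕ)) =
        gen k Γ (cycEdge Γ v h 0) ::
          ((List.ofFn (fun i : Fin (m + 2) => gen k Γ (cycEdge Γ v h i.succ))).eraseIdx j) := by
      simp [Fin.val_succ, List.eraseIdx]
    rw [this, List.prod_cons, mul_smul_comm, ← mul_assoc]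
    have : gen k Γ (cycEdge Γ v h 0) * gen k Γ (cycEdge Γ v h 0) = 0 :=
      ExteriorAlgebra.ι_sq_zero _
    rw [this, zero_mul, smul_zero]
  rw [Finset.sum_congr rfl (fun j _ => htail j), Finset.sum_const_zero, add_zero]
  rw [h0, one_smul, hL]
  simp [List.prod_cons]

theorem edgeMonomial_mem_cycIdeal_of_hasCycle
    (k : Type) [CommRing k] {V : Type} [DecidableEq V] (Γ : SimpleGraph V)
    [LinearOrder ↥Γ.edgeSet] (S : Finset ↥Γ.edgeSet) (hS : HasCycleIn Γ S) :
    edgeMonomial k Γ S ∈ cycIdeal k Γ := by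
  obtain ⟨m, v, h, hinj, hmem⟩ := hS
  -- the cycle edges are pairwise distinct
  have hedgeinj : Function.Injective (cycEdge Γ v h) := by
    intro i j hij
    have := congrArg Subtype.val hij
    simp only [cycEdge] at this
    rcases Sym2.eq_iff.mp this with ⟨h1, h2⟩ | ⟨h1, h2⟩
    · exact hinj h1
    · exfalso
      have e1 : i = j + 1 := hinj h1
      have e2 : i + 1 = j := hinj h2
      have e3 : i + (1 + 1) = i + 0 := by
        rw [add_zero, ← add_assoc, e2, ← e1]
      have h2' : (1 + 1 : Fin (m+3)) = 0 := add_left_cancel e3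
      have hval : ((1 + 1 : Fin (m+3)) : ℕ) = ((0 : Fin (m+3)) : ℕ) := congrArg _ h2'
      have hv : ((1 + 1 : Fin (m+3)) : ℕ) = 2 := by
        have h4 : ((1 + 1 : Fin (m+3)) : ℕ) = (1 + 1) % (m + 3) := by
          simp [Fin.add_def, Fin.val_one]
        rw [h4, Nat.mod_eq_of_lt (by omega)]
      simp [hv] at hval
  set T : Finset ↥Γ.edgeSet := Finset.image (cycEdge Γ v h) Finset.univ with hT
  have hTS : T ⊆ S := by
    intro x hx
    simp only [hT, Finset.mem_image] at hx
    obtain ⟨i, _, rfl⟩ := hx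
    exact hmem i
  -- the two lists
  set L1 : List ↥Γ.edgeSet := List.ofFn (S.orderEmbOfFin rfl) with hL1
  set L2 : List ↥Γ.edgeSet :=
    List.ofFn (cycEdge Γ v h) ++ List.ofFn ((S \ T).orderEmbOfFin rfl) with hL2
  have holinj : ∀ (A : Finset ↥Γ.edgeSet),
      Function.Injective (A.orderEmbOfFin rfl) := fun A => (A.orderEmbOfFin rfl).injective
  have holmem : ∀ (A : Finset ↥Γ.edgeSet) (x : ↥Γ.edgeSet),
      (x ∈ List.ofFn (A.orderEmbOfFin rfl)) ↔ x ∈ A := by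
    intro A x
    rw [List.mem_ofFn, ← Set.mem_range, Finset.range_orderEmbOfFin]
    rfl
  have hperm : L1.Perm L2 := by
    apply List.perm_of_nodup_nodup_toFinset_eq
    · exact List.nodup_ofFn.mpr (holinj S)
    · rw [hL2]
      refine List.Nodup.append (List.nodup_ofFn.mpr hedgeinj)
        (List.nodup_ofFn.mpr (holinj _)) ?_
      intro x hx hx'
      rw [List.mem_ofFn] at hx
      obtain ⟨i, rfl⟩ := hx
      rw [holmem, Finset.mem_sdiff] at hx'
      exact hx'.2 (by simp [hT])
    · ext x
      simp only [List.mem_toFinset, hL2, List.mem_append, holmem, hL1]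
      rw [List.mem_ofFn]
      constructor
      · intro hx
        by_cases hxT : x ∈ T
        · simp only [hT, Finset.mem_image] at hxT
          obtain ⟨i, _, rfl⟩ := hxT
          exact Or.inl ⟨i, rfl⟩
        · exact Or.inr (Finset.mem_sdiff.mpr ⟨hx, hxT⟩)
      · rintro (⟨i, rfl⟩ | hx)
        · exact hmem i
        · exact (Finset.mem_sdiff.mp hx).1
  -- L2's product is in the ideal
  have hL2mem : (L2.map (gen k Γ)).prod ∈ cycIdeal k Γ := by
    apply Submodule.subset_span
    refine ⟨m, v, h, hinj, gen k Γ (cycEdge Γ v h 0),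
      ((List.ofFn ((S \ T).orderEmbOfFin rfl)).map (gen k Γ)).prod, ?_⟩
    rw [hL2, List.map_append, List.prod_append, List.map_ofFn]
    rw [show (gen k Γ ∘ cycEdge Γ v h) = fun i => gen k Γ (cycEdge Γ v h i) from rfl]
    rw [← gen_mul_cycBoundary k Γ v h]
  -- transfer along the permutation
  have hM : edgeMonomial k Γ S = (L1.map (gen k Γ)).prod := by
    have hfun : (fun j : Fin S.card => gen k Γ (S.orderIsoOfFin rfl j : ↥Γ.edgeSet)) =
        gen k Γ ∘ (S.orderEmbOfFin rfl) := by
      funext j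
      simp [Function.comp, Finset.coe_orderIsoOfFin_apply]
    rw [edgeMonomial, hfun, hL1, List.map_ofFn]
  rcases prod_perm_sign k Γ hperm with he | he
  · rw [hM, he]; exact hL2mem
  · rw [hM, he]; exact Submodule.neg_mem _ hL2mem


end
end

section
/- Let Γ be a connected multigraph with n vertices. Then the homology of the complex of connected subgraphs C_conn(Γ) is concentrated in degree n−1: H_i(C_conn(Γ)) = 0 for every i ≠ n−1. -/
/-!
Statement 9. Let `Γ` be a connected multigraph with `n` vertices (vertex set `V`, linearly
ordered edge set `E`, endpoint map `ends : E → Sym2 V`).  The complex of connected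
subgraphs `C_conn(Γ)` (free abelian on connected spanning subgraphs with `i` edges, with
the edge-deletion differential) has homology concentrated in degree `n − 1`:
`H_i(C_conn(Γ)) = 0` for every `i ≠ n − 1`.
-/

noncomputable section

open scoped Classical

variable {V E : Type}

/-- One step of a walk: `x` and `y` are joined by an edge of `S`. -/
def StepRel (ends : E → Sym2 V) (S : Finset E) (x y : V) : Prop :=
  ∃ e ∈ S, ends e = s(x, y)

/-- The spanning subgraph `(V, S)` is connected. -/
def IsConn (ends : E → Sym2 V) (S : Finset E) : Prop :=
  ∀ a b : V, Relation.ReflTransGen (StepRel ends S) a b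

/-- Connected spanning subgraphs with `i` edges: the basis of `C_conn(Γ)_i`. -/
def ConnSub (ends : E → Sym2 V) (i : ℕ) : Type _ :=
  {S : Finset E // S.card = i ∧ IsConn ends S}

/-- The degree-`i` chain group of the complex of connected subgraphs. -/
abbrev CConn (ends : E → Sym2 V) (i : ℕ) : Type _ :=
  ConnSub ends i →₀ ℤ

/-- `ν(e, S)`: the number of edges of `S` strictly preceding `e`. -/
def nuEdge [LinearOrder E] (e : E) (S : Finset E) : ℕ :=
  (S.filter fun f => f < e).card

/-- The differential of `C_conn(Γ)`:
`d(S) = Σ (−1)^{ν(e,S)} (S∖{e})`, the sum over those `e ∈ S` whose removal keeps `(V, S∖{e})`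
connected. -/
noncomputable def bdry [DecidableEq E] [LinearOrder E] (ends : E → Sym2 V) (i : ℕ) :
    CConn ends (i + 1) →ₗ[ℤ] CConn ends i :=
  Finsupp.lsum ℤ fun S : ConnSub ends (i + 1) =>
    LinearMap.toSpanSingleton ℤ (CConn ends i)
      (∑ e ∈ S.1.attach,
        if h : IsConn ends (S.1.erase e.1) then
          ((-1 : ℤ) ^ nuEdge e.1 S.1) •
            Finsupp.single
              (⟨S.1.erase e.1, by simp [Finset.card_erase_of_mem e.2, S.2.1], h⟩ :
                ConnSub ends i) 1
        else 0)

/-- `H_0` of the complex of connected subgraphs. -/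
abbrev ConnH0 [DecidableEq E] [LinearOrder E] (ends : E → Sym2 V) : Type _ :=
  CConn ends 0 ⧸ LinearMap.range (bdry ends 0)

/-- `H_{i+1}` of the complex of connected subgraphs. -/
abbrev ConnH [DecidableEq E] [LinearOrder E] (ends : E → Sym2 V) (i : ℕ) : Type _ :=
  ↥(LinearMap.ker (bdry ends i)) ⧸
    Submodule.comap (LinearMap.ker (bdry ends i)).subtype
      (LinearMap.range (bdry ends (i + 1)))


/-! ## Auxiliary development -/

namespace CCX

variable [LinearOrder E]

/-- The partition (as a relation) determined by a spanning subgraph. -/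
def Part (ends : E → Sym2 V) (S : Finset E) : V → V → Prop :=
  Relation.ReflTransGen (StepRel ends S)

lemma stepRel_symm {ends : E → Sym2 V} {S : Finset E} {a b : V} (h : StepRel ends S a b) :
    StepRel ends S b a := by
  obtain ⟨e, he, hab⟩ := h
  exact ⟨e, he, by rwa [Sym2.eq_swap]⟩

lemma part_refl (ends : E → Sym2 V) (S : Finset E) (a : V) : Part ends S a a :=
  Relation.ReflTransGen.refl

lemma part_symm {ends : E → Sym2 V} {S : Finset E} {a b : V} (h : Part ends S a b) :
    Part ends S b a :=
  (@Relation.ReflTransGen.symmetric _ _ ⟨fun _ _ hs => stepRel_symm hs⟩).symm _ _ h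

lemma part_trans {ends : E → Sym2 V} {S : Finset E} {a b c : V}
    (h : Part ends S a b) (h' : Part ends S b c) : Part ends S a c :=
  Relation.ReflTransGen.trans h h'

lemma part_mono {ends : E → Sym2 V} {S T : Finset E} (hST : S ⊆ T) {a b : V}
    (h : Part ends S a b) : Part ends T a b := by
  refine Relation.ReflTransGen.mono (fun u v (huv : StepRel ends S u v) =>
    (?_ : StepRel ends T u v)) a b h
  obtain ⟨e, he, hev⟩ := huv
  exact ⟨e, hST he, hev⟩

lemma part_of_mem {ends : E → Sym2 V} {S : Finset E} {e : E} {x y : V}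
    (he : e ∈ S) (hxy : ends e = s(x, y)) : Part ends S x y :=
  Relation.ReflTransGen.single ⟨e, he, hxy⟩

/-- Adding an edge whose endpoints are already connected does not change the partition. -/
lemma part_insert_eq {ends : E → Sym2 V} {S : Finset E} {e : E} {x y : V}
    (he : ends e = s(x, y)) (hxy : Part ends S x y) :
    Part ends (insert e S) = Part ends S := by
  funext a b
  apply propext
  constructor
  · intro h
    induction h with
    | refl => exact part_refl _ _ _
    | tail _ hs ih =>
      rename_i b c _
      obtain ⟨f, hf, hfc⟩ := hs
      rcases Finset.mem_insert.mp hf with rfl | hfS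
      · rw [he] at hfc
        rcases Sym2.eq_iff.mp hfc with ⟨rfl, rfl⟩ | ⟨rfl, rfl⟩
        · exact part_trans ih hxy
        · exact part_trans ih (part_symm hxy)
      · exact part_trans ih (part_of_mem hfS hfc)
  · exact part_mono (Finset.subset_insert _ _)

/-- Sandwich lemma. -/
lemma part_eq_sandwich {ends : E → Sym2 V} {S U T : Finset E} {P : V → V → Prop}
    (hSU : S ⊆ U) (hUT : U ⊆ T) (hS : Part ends S = P) (hT : Part ends T = P) :
    Part ends U = P := by
  funext a b
  apply propext
  constructor
  · intro h
    rw [← hT]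
    exact part_mono hUT h
  · intro h
    rw [← hS] at h
    exact part_mono hSU h

lemma part_empty (ends : E → Sym2 V) (a b : V) : Part ends ∅ a b ↔ a = b := by
  constructor
  · intro h
    induction h with
    | refl => rfl
    | tail _ hs ih => obtain ⟨e, he, _⟩ := hs; simp at he
  · rintro rfl; exact part_refl _ _ _

lemma isConn_iff_part {ends : E → Sym2 V} {S : Finset E} :
    IsConn ends S ↔ Part ends S = fun _ _ => True := by
  constructor
  · intro h; funext a b; simp only [eq_iff_iff, iff_true]; exact h a b
  · intro h a b; rw [show Relation.ReflTransGen (StepRel ends S) = Part ends S from rfl, h]; trivial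

/-! ### Finset and sign lemmas -/

lemma erase_sdiff (S F : Finset E) (f : E) : S.erase f \ F = (S \ F).erase f := by
  ext g; simp [Finset.mem_erase, Finset.mem_sdiff]; tauto

lemma sdiff_insert' (S F : Finset E) (e : E) : S \ insert e F = (S \ F).erase e := by
  ext g; simp [Finset.mem_erase, Finset.mem_sdiff]; tauto

lemma nu_insert_of_lt {f e : E} (h : f < e) (M : Finset E) :
    nuEdge f (insert e M) = nuEdge f M := by
  unfold nuEdge
  rw [Finset.filter_insert, if_neg (by exact fun h' => absurd (h'.trans h) (lt_irrefl e))]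

lemma nu_insert_self {e : E} {M : Finset E} (hM : ∀ f ∈ M, f < e) (he : e ∉ M) :
    nuEdge e (insert e M) = M.card := by
  unfold nuEdge
  rw [Finset.filter_insert, if_neg (lt_irrefl e), Finset.filter_true_of_mem hM]

lemma nu_erase_of_lt {f g : E} (h : f < g) (M : Finset E) :
    nuEdge f (M.erase g) = nuEdge f M := by
  unfold nuEdge
  have : (M.erase g).filter (fun x => x < f) = (M.filter (fun x => x < f)).erase g := by
    ext x; simp [Finset.mem_erase, Finset.mem_filter]; tauto
  rw [this, Finset.erase_eq_of_notMem]
  simp only [Finset.mem_filter, not_and]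
  intro _ hg; exact absurd (hg.trans h) (lt_irrefl g)

lemma nu_erase_of_gt {f g : E} (h : g < f) {M : Finset E} (hg : g ∈ M) :
    nuEdge f (M.erase g) + 1 = nuEdge f M := by
  unfold nuEdge
  have : (M.erase g).filter (fun x => x < f) = (M.filter (fun x => x < f)).erase g := by
    ext x; simp [Finset.mem_erase, Finset.mem_filter]; tauto
  rw [this, Finset.card_erase_add_one (by simp [Finset.mem_filter, hg, h])]

lemma filter_lt_max {e : E} {M : Finset E} (hM : ∀ f ∈ M, f ≠ e → f < e) :
    M.filter (fun f => f < e) = M.erase e := by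
  ext f
  simp only [Finset.mem_filter, Finset.mem_erase]
  constructor
  · rintro ⟨hf, hlt⟩; exact ⟨ne_of_lt hlt, hf⟩
  · rintro ⟨hne, hf⟩; exact ⟨hf, hM f hf hne⟩

/-! ### The master differential and homotopy -/

/-- summand of the master differential -/
def ddS (ends : E → Sym2 V) (P : V → V → Prop) (F : Finset E) (S : Finset E) :
    Finset E →₀ ℤ :=
  ∑ f ∈ S \ F, if Part ends (S.erase f) = P then
    ((-1 : ℤ) ^ nuEdge f (S \ F)) • Finsupp.single (S.erase f) 1 else 0

/-- the master differential on the big free module -/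
def dd (ends : E → Sym2 V) (P : V → V → Prop) (F : Finset E) :
    (Finset E →₀ ℤ) →ₗ[ℤ] (Finset E →₀ ℤ) :=
  Finsupp.lsum ℤ fun S => LinearMap.toSpanSingleton ℤ _ (ddS ends P F S)

lemma dd_single (ends : E → Sym2 V) (P : V → V → Prop) (F S : Finset E) (c : ℤ) :
    dd ends P F (Finsupp.single S c) = c • ddS ends P F S := by
  simp [dd, LinearMap.toSpanSingleton_apply]

/-- summand of the homotopy -/
def hhS (e : E) (F : Finset E) (S : Finset E) : Finset E →₀ ℤ :=
  if e ∈ S then 0 else ((-1 : ℤ) ^ (S \ F).card) • Finsupp.single (insert e S) 1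

def hh (e : E) (F : Finset E) : (Finset E →₀ ℤ) →ₗ[ℤ] (Finset E →₀ ℤ) :=
  Finsupp.lsum ℤ fun S => LinearMap.toSpanSingleton ℤ _ (hhS e F S)

lemma hh_single (e : E) (F S : Finset E) (c : ℤ) :
    hh e F (Finsupp.single S c) = c • hhS e F S := by
  simp [hh, LinearMap.toSpanSingleton_apply]

variable {ends : E → Sym2 V} {P : V → V → Prop}

lemma keyA {e : E} {F S : Finset E}
    (heS : e ∈ S) (heF : e ∉ F)
    (hlt : ∀ f ∈ S \ F, f ≠ e → f < e) :
    dd ends P F (hh e F (Finsupp.single S 1)) + hh e F (dd ends P F (Finsupp.single S 1)) =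
      if Part ends (S.erase e) = P then Finsupp.single S 1 else 0 := by
  have h1 : hh e F (Finsupp.single S 1) = 0 := by
    rw [hh_single, hhS, if_pos heS, smul_zero]
  rw [h1, map_zero, zero_add, dd_single, one_smul, ddS, map_sum]
  have heSF : e ∈ S \ F := Finset.mem_sdiff.mpr ⟨heS, heF⟩
  rw [Finset.sum_eq_single_of_mem e heSF]
  · by_cases hc : Part ends (S.erase e) = P
    · rw [if_pos hc, if_pos hc, map_smul, hh_single, one_smul, hhS,
        if_neg (Finset.notMem_erase e S), erase_sdiff, Finset.insert_erase heS]
      have hcard : ((S \ F).erase e).card = nuEdge e (S \ F) := by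
        rw [nuEdge, filter_lt_max hlt]
      rw [hcard, smul_smul, ← pow_add, Even.neg_one_pow ⟨_, rfl⟩, one_smul]
    · rw [if_neg hc, if_neg hc, map_zero]
  · intro f hf hfe
    by_cases hc : Part ends (S.erase f) = P
    · rw [if_pos hc, map_smul, hh_single, one_smul, hhS,
        if_pos (Finset.mem_erase.mpr ⟨hfe.symm, heS⟩), smul_zero]
    · rw [if_neg hc, map_zero]

lemma keyB {e : E} {x y : V} {F S : Finset E}
    (hends : ends e = s(x, y)) (hxy : P x y)
    (heS : e ∉ S) (heF : e ∉ F) (hS : Part ends S = P)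
    (hlt : ∀ f ∈ S \ F, f < e) :
    dd ends P F (hh e F (Finsupp.single S 1)) + hh e F (dd ends P F (Finsupp.single S 1)) =
      Finsupp.single S 1 + ∑ f ∈ S \ F,
        (if Part ends (insert e (S.erase f)) = P ∧ ¬ Part ends (S.erase f) = P then
          (-(-1 : ℤ) ^ (nuEdge f (S \ F) + (S.erase f \ F).card)) •
            Finsupp.single (insert e (S.erase f)) 1 else 0) := by
  have heSF : e ∉ S \ F := fun h => heS (Finset.mem_sdiff.mp h).1
  have hT1 : dd ends P F (hh e F (Finsupp.single S 1)) =
      Finsupp.single S 1 + ((-1 : ℤ) ^ (S \ F).card) •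
        ∑ f ∈ S \ F, (if Part ends (insert e (S.erase f)) = P then
          ((-1 : ℤ) ^ nuEdge f (S \ F)) • Finsupp.single (insert e (S.erase f)) 1 else 0) := by
    rw [hh_single, one_smul, hhS, if_neg heS, map_smul, dd_single, one_smul, ddS,
      Finset.insert_sdiff_of_notMem _ heF, Finset.sum_insert heSF,
      Finset.erase_insert heS, if_pos hS, nu_insert_self hlt heSF]
    rw [smul_add, smul_smul, ← pow_add, Even.neg_one_pow ⟨_, rfl⟩, one_smul]
    congr 1
    congr 1
    apply Finset.sum_congr rfl
    intro f hf
    have hfe : f < e := hlt f hf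
    rw [Finset.erase_insert_of_ne (ne_of_gt hfe), nu_insert_of_lt hfe]
  have hT2 : hh e F (dd ends P F (Finsupp.single S 1)) =
      ∑ f ∈ S \ F, (if Part ends (S.erase f) = P then
        ((-1 : ℤ) ^ (nuEdge f (S \ F) + (S.erase f \ F).card)) •
          Finsupp.single (insert e (S.erase f)) 1 else 0) := by
    rw [dd_single, one_smul, ddS, map_sum]
    apply Finset.sum_congr rfl
    intro f hf
    by_cases hc : Part ends (S.erase f) = P
    · rw [if_pos hc, if_pos hc, map_smul, hh_single, one_smul, hhS,
        if_neg (fun h => heS (Finset.mem_of_mem_erase h)), smul_smul, ← pow_add]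
    · rw [if_neg hc, if_neg hc, map_zero]
  rw [hT1, hT2, Finset.smul_sum, add_assoc, ← Finset.sum_add_distrib]
  congr 1
  apply Finset.sum_congr rfl
  intro f hf
  have hm : (S.erase f \ F).card + 1 = (S \ F).card := by
    rw [erase_sdiff]; exact Finset.card_erase_add_one hf
  by_cases hB : Part ends (S.erase f) = P
  · have hA : Part ends (insert e (S.erase f)) = P := by
      rw [part_insert_eq (S := S.erase f) hends (by rw [hB]; exact hxy), hB]
    rw [if_pos hA, if_pos hB, if_neg (fun h => h.2 hB), smul_smul, ← add_smul]
    convert zero_smul ℤ _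
    rw [← hm, pow_succ, pow_add]
    ring
  · by_cases hA : Part ends (insert e (S.erase f)) = P
    · rw [if_pos hA, if_neg hB, if_pos ⟨hA, hB⟩, add_zero, smul_smul]
      congr 1
      rw [← hm, pow_succ, pow_add]
      ring
    · rw [if_neg hA, if_neg hB, if_neg (fun h => hA h.1), smul_zero, add_zero]

/-! ### Linearity helpers -/

lemma repr_sum (z : Finset E →₀ ℤ) :
    z = ∑ S ∈ z.support, (z S) • Finsupp.single S (1 : ℤ) := by
  conv_lhs => rw [← Finsupp.sum_single z]
  rw [Finsupp.sum]
  apply Finset.sum_congr rfl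
  intro S _
  rw [Finsupp.smul_single, smul_eq_mul, mul_one]

lemma map_eq_on_supported {L L' : (Finset E →₀ ℤ) →ₗ[ℤ] (Finset E →₀ ℤ)}
    {s : Set (Finset E)}
    (h : ∀ S ∈ s, L (Finsupp.single S 1) = L' (Finsupp.single S 1))
    {z : Finset E →₀ ℤ} (hz : z ∈ Finsupp.supported ℤ ℤ s) : L z = L' z := by
  rw [repr_sum z, map_sum, map_sum]
  apply Finset.sum_congr rfl
  intro S hS
  rw [map_smul, map_smul, h S (hz hS)]

lemma map_mem_supported {L : (Finset E →₀ ℤ) →ₗ[ℤ] (Finset E →₀ ℤ)}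
    {s t : Set (Finset E)}
    (h : ∀ S ∈ s, L (Finsupp.single S 1) ∈ Finsupp.supported ℤ ℤ t)
    {z : Finset E →₀ ℤ} (hz : z ∈ Finsupp.supported ℤ ℤ s) :
    L z ∈ Finsupp.supported ℤ ℤ t := by
  rw [repr_sum z, map_sum]
  apply Submodule.sum_mem
  intro S hS
  rw [map_smul]
  exact Submodule.smul_mem _ _ (h S (hz hS))

lemma map_eq_zero_on_supported {L : (Finset E →₀ ℤ) →ₗ[ℤ] (Finset E →₀ ℤ)}
    {s : Set (Finset E)}
    (h : ∀ S ∈ s, L (Finsupp.single S 1) = 0)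
    {z : Finset E →₀ ℤ} (hz : z ∈ Finsupp.supported ℤ ℤ s) : L z = 0 := by
  rw [repr_sum z, map_sum]
  apply Finset.sum_eq_zero
  intro S hS
  rw [map_smul, h S (hz hS), smul_zero]

/-! ### d² = 0 -/

lemma dd_dd_single {F S : Finset E} (hS : Part ends S = P) :
    dd ends P F (dd ends P F (Finsupp.single S 1)) = 0 := by
  rw [dd_single, one_smul, ddS, map_sum]
  have expand : ∀ f ∈ S \ F,
      dd ends P F (if Part ends (S.erase f) = P then
        ((-1 : ℤ) ^ nuEdge f (S \ F)) • Finsupp.single (S.erase f) 1 else 0) =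
      ∑ g ∈ (S \ F).erase f,
        (if Part ends (S.erase f) = P ∧ Part ends ((S.erase f).erase g) = P then
          ((-1 : ℤ) ^ (nuEdge f (S \ F) + nuEdge g ((S \ F).erase f))) •
            Finsupp.single ((S.erase f).erase g) 1 else 0) := by
    intro f hf
    by_cases hc : Part ends (S.erase f) = P
    · rw [if_pos hc, map_smul, dd_single, one_smul, ddS, erase_sdiff, Finset.smul_sum]
      apply Finset.sum_congr rfl
      intro g hg
      by_cases hc2 : Part ends ((S.erase f).erase g) = P
      · rw [if_pos hc2, if_pos ⟨hc, hc2⟩, smul_smul, ← pow_add]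
      · rw [if_neg hc2, if_neg (fun h => hc2 h.2), smul_zero]
    · rw [if_neg hc, map_zero]
      symm
      apply Finset.sum_eq_zero
      intro g _
      rw [if_neg (fun h => hc h.1)]
  rw [Finset.sum_congr rfl expand]
  -- now a double sum; convert to a sum over pairs and cancel with the swap involution
  rw [Finset.sum_sigma']
  set T : (_ : E) × E → (Finset E →₀ ℤ) := fun p =>
    if Part ends (S.erase p.1) = P ∧ Part ends ((S.erase p.1).erase p.2) = P then
      ((-1 : ℤ) ^ (nuEdge p.1 (S \ F) + nuEdge p.2 ((S \ F).erase p.1))) •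
        Finsupp.single ((S.erase p.1).erase p.2) 1 else 0 with hT
  show ∑ p ∈ (S \ F).sigma (fun f => (S \ F).erase f), T p = 0
  have key : ∀ p ∈ (S \ F).sigma (fun f => (S \ F).erase f),
      T p + T ⟨p.2, p.1⟩ = 0 := by
    rintro ⟨f, g⟩ hp
    simp only [Finset.mem_sigma, Finset.mem_erase] at hp
    obtain ⟨hf, hgf, hg⟩ := hp
    have hsym : (S.erase f).erase g = (S.erase g).erase f := Finset.erase_right_comm
    have hcond : (Part ends (S.erase f) = P ∧ Part ends ((S.erase f).erase g) = P) ↔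
        (Part ends (S.erase g) = P ∧ Part ends ((S.erase g).erase f) = P) := by
      constructor
      · rintro ⟨h1, h2⟩
        have hsub : (S.erase f).erase g ⊆ S.erase g := by
          rw [hsym]; exact Finset.erase_subset _ _
        exact ⟨part_eq_sandwich hsub (Finset.erase_subset _ _) h2 hS, hsym ▸ h2⟩
      · rintro ⟨h1, h2⟩
        have hsub : (S.erase g).erase f ⊆ S.erase f := by
          rw [← hsym]; exact Finset.erase_subset _ _
        exact ⟨part_eq_sandwich hsub (Finset.erase_subset _ _) h2 hS, hsym.symm ▸ h2⟩
    have hsign : ((-1 : ℤ) ^ (nuEdge f (S \ F) + nuEdge g ((S \ F).erase f))) =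
        -((-1 : ℤ) ^ (nuEdge g (S \ F) + nuEdge f ((S \ F).erase g))) := by
      rcases lt_or_gt_of_ne hgf with hlt | hlt
      · rw [nu_erase_of_lt hlt, ← nu_erase_of_gt hlt hg, pow_add, pow_add, pow_succ]
        ring
      · rw [nu_erase_of_lt hlt, ← nu_erase_of_gt hlt hf, pow_add, pow_add, pow_succ]
        ring
    show T ⟨f, g⟩ + T ⟨g, f⟩ = 0
    by_cases hc : Part ends (S.erase f) = P ∧ Part ends ((S.erase f).erase g) = P
    · rw [hT]
      simp only []
      rw [if_pos hc, if_pos (hcond.mp hc), hsign, hsym, neg_smul, neg_add_cancel]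
    · rw [hT]
      simp only []
      rw [if_neg hc, if_neg (fun h => hc (hcond.mpr h)), add_zero]
  refine Finset.sum_involution (fun p _ => ⟨p.2, p.1⟩) key ?_ ?_ ?_
  · rintro ⟨f, g⟩ hp hne
    simp only [Finset.mem_sigma, Finset.mem_erase] at hp
    intro h
    have h1 : g = f := congrArg Sigma.fst h
    exact hp.2.1 h1
  · rintro ⟨f, g⟩ hp
    simp only [Finset.mem_sigma, Finset.mem_erase] at hp ⊢
    exact ⟨hp.2.2, Ne.symm hp.2.1, hp.1⟩
  · rintro ⟨f, g⟩ _
    rfl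

lemma dd_dd {F : Finset E} {z : Finset E →₀ ℤ}
    (hz : z ∈ Finsupp.supported ℤ ℤ {S : Finset E | Part ends S = P}) :
    dd ends P F (dd ends P F z) = 0 := by
  have := map_eq_zero_on_supported (L := (dd ends P F).comp (dd ends P F))
    (s := {S : Finset E | Part ends S = P}) (fun S hS => dd_dd_single hS) hz
  simpa using this

/-! ### Basis sets and supports -/

def basisSet (ends : E → Sym2 V) (P : V → V → Prop) (F A : Finset E) (j : ℕ) :
    Set (Finset E) :=
  {S | F ⊆ S ∧ S ⊆ A ∧ Part ends S = P ∧ (S \ F).card = j}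

def BSet (ends : E → Sym2 V) (P : V → V → Prop) (e : E) (F A : Finset E) (j : ℕ) :
    Set (Finset E) :=
  {S | S ∈ basisSet ends P (insert e F) A j ∧ ¬ Part ends (S.erase e) = P}

lemma BSet_subset_basisF {e : E} {F A : Finset E} {j : ℕ} (heF : e ∉ F) :
    BSet ends P e F A j ⊆ basisSet ends P F A (j + 1) := by
  rintro S ⟨⟨hFS, hSA, hP, hcard⟩, _⟩
  have heS : e ∈ S := hFS (Finset.mem_insert_self e F)
  refine ⟨(Finset.subset_insert e F).trans hFS, hSA, hP, ?_⟩
  rw [sdiff_insert'] at hcard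
  rw [← hcard]
  exact (Finset.card_erase_add_one (Finset.mem_sdiff.mpr ⟨heS, heF⟩)).symm

lemma dd_deg {F A : Finset E} {j : ℕ} {z : Finset E →₀ ℤ}
    (hz : z ∈ Finsupp.supported ℤ ℤ (basisSet ends P F A (j + 1))) :
    dd ends P F z ∈ Finsupp.supported ℤ ℤ (basisSet ends P F A j) := by
  refine map_mem_supported (fun S hS => ?_) hz
  obtain ⟨hFS, hSA, hP, hcard⟩ := hS
  rw [dd_single, one_smul, ddS]
  apply Submodule.sum_mem
  intro f hf
  obtain ⟨hfS, hfF⟩ := Finset.mem_sdiff.mp hf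
  by_cases hc : Part ends (S.erase f) = P
  · rw [if_pos hc]
    apply Submodule.smul_mem
    apply Finsupp.single_mem_supported
    refine ⟨fun g hg => Finset.mem_erase.mpr ⟨fun h => hfF (h ▸ hg), hFS hg⟩,
      (Finset.erase_subset _ _).trans hSA, hc, ?_⟩
    rw [erase_sdiff, Finset.card_erase_of_mem hf, hcard]
    rfl
  · rw [if_neg hc]
    exact Submodule.zero_mem _

lemma hh_deg {e : E} {x y : V} {F A : Finset E} {j : ℕ}
    (hends : ends e = s(x, y)) (hxy : P x y) (heA : e ∈ A) (heF : e ∉ F)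
    {z : Finsupp (Finset E) ℤ}
    (hz : z ∈ Finsupp.supported ℤ ℤ (basisSet ends P F A j)) :
    hh e F z ∈ Finsupp.supported ℤ ℤ (basisSet ends P F A (j + 1)) := by
  refine map_mem_supported (fun S hS => ?_) hz
  obtain ⟨hFS, hSA, hP, hcard⟩ := hS
  rw [hh_single, one_smul, hhS]
  by_cases heS : e ∈ S
  · rw [if_pos heS]; exact Submodule.zero_mem _
  · rw [if_neg heS]
    apply Submodule.smul_mem
    apply Finsupp.single_mem_supported
    refine ⟨hFS.trans (Finset.subset_insert _ _), Finset.insert_subset heA hSA,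
      by rw [part_insert_eq (S := S) hends (by rw [hP]; exact hxy)]; exact hP, ?_⟩
    rw [Finset.insert_sdiff_of_notMem _ heF,
      Finset.card_insert_of_notMem (fun h => heS (Finset.mem_sdiff.mp h).1), hcard]

/-- On `BSet` the two differentials (with `F` and with `insert e F`) agree. -/
lemma dd_eq_on_BSet {e : E} {F A : Finset E} {j : ℕ} (heF : e ∉ F)
    (hlt : ∀ f ∈ A \ F, f ≠ e → f < e)
    {z : Finset E →₀ ℤ} (hz : z ∈ Finsupp.supported ℤ ℤ (BSet ends P e F A j)) :
    dd ends P F z = dd ends P (insert e F) z := by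
  refine map_eq_on_supported (fun S hS => ?_) hz
  obtain ⟨⟨hFS, hSA, hP, hcard⟩, hne⟩ := hS
  have heS : e ∈ S := hFS (Finset.mem_insert_self e F)
  have heSF : e ∈ S \ F := Finset.mem_sdiff.mpr ⟨heS, heF⟩
  rw [dd_single, dd_single, one_smul, one_smul, ddS, ddS]
  rw [← Finset.add_sum_erase _ _ heSF, if_neg hne, zero_add]
  rw [show S \ insert e F = (S \ F).erase e from sdiff_insert' S F e]
  apply Finset.sum_congr rfl
  intro f hf
  obtain ⟨hfe, hfSF⟩ := Finset.mem_erase.mp hf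
  have hflt : f < e :=
    hlt f (Finset.mem_sdiff.mpr ⟨hSA (Finset.mem_sdiff.mp hfSF).1, (Finset.mem_sdiff.mp hfSF).2⟩) hfe
  rw [nu_erase_of_lt hflt]

/-! ### The maps π and σ -/

def piS (ends : E → Sym2 V) (P : V → V → Prop) (e : E) (S : Finset E) : Finset E →₀ ℤ :=
  if e ∈ S ∧ Part ends (S.erase e) = P then Finsupp.single (S.erase e) 1 else 0

def piM (ends : E → Sym2 V) (P : V → V → Prop) (e : E) :
    (Finset E →₀ ℤ) →ₗ[ℤ] (Finset E →₀ ℤ) :=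
  Finsupp.lsum ℤ fun S => LinearMap.toSpanSingleton ℤ _ (piS ends P e S)

lemma piM_single (e : E) (S : Finset E) (c : ℤ) :
    piM ends P e (Finsupp.single S c) = c • piS ends P e S := by
  simp [piM, LinearMap.toSpanSingleton_apply]

def sgM (e : E) : (Finset E →₀ ℤ) →ₗ[ℤ] (Finset E →₀ ℤ) :=
  Finsupp.lsum ℤ fun S => LinearMap.toSpanSingleton ℤ _ (Finsupp.single (insert e S) 1)

lemma sgM_single (e : E) (S : Finset E) (c : ℤ) :
    sgM e (Finsupp.single S c) = c • Finsupp.single (insert e S) (1 : ℤ) := by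
  simp [sgM, LinearMap.toSpanSingleton_apply]

lemma piM_kill_BSet {e : E} {F A : Finset E} {j : ℕ}
    {z : Finset E →₀ ℤ} (hz : z ∈ Finsupp.supported ℤ ℤ (BSet ends P e F A j)) :
    piM ends P e z = 0 := by
  refine map_eq_zero_on_supported (fun S hS => ?_) hz
  rw [piM_single, one_smul, piS, if_neg (fun h => hS.2 h.2)]

lemma piM_deg {e : E} {F A : Finset E} {j : ℕ} (heF : e ∉ F)
    {z : Finset E →₀ ℤ}
    (hz : z ∈ Finsupp.supported ℤ ℤ (basisSet ends P (insert e F) A j)) :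
    piM ends P e z ∈ Finsupp.supported ℤ ℤ (basisSet ends P F (A.erase e) j) := by
  refine map_mem_supported (fun S hS => ?_) hz
  obtain ⟨hFS, hSA, hP, hcard⟩ := hS
  have heS : e ∈ S := hFS (Finset.mem_insert_self e F)
  rw [piM_single, one_smul, piS]
  by_cases hc : e ∈ S ∧ Part ends (S.erase e) = P
  · rw [if_pos hc]
    apply Finsupp.single_mem_supported
    refine ⟨?_, fun g hg => Finset.mem_erase.mpr
        ⟨(Finset.mem_erase.mp hg).1, hSA (Finset.mem_erase.mp hg).2⟩, hc.2, ?_⟩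
    · intro g hg
      exact Finset.mem_erase.mpr ⟨fun h => heF (h ▸ hg), hFS (Finset.mem_insert_of_mem hg)⟩
    · rw [erase_sdiff, ← sdiff_insert', hcard]
  · rw [if_neg hc]
    exact Submodule.zero_mem _

lemma sgM_deg {e : E} {x y : V} {F A : Finset E} {j : ℕ}
    (hends : ends e = s(x, y)) (hxy : P x y) (heA : e ∈ A)
    {z : Finset E →₀ ℤ}
    (hz : z ∈ Finsupp.supported ℤ ℤ (basisSet ends P F (A.erase e) j)) :
    sgM e z ∈ Finsupp.supported ℤ ℤ (basisSet ends P (insert e F) A j) := by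
  refine map_mem_supported (fun S hS => ?_) hz
  obtain ⟨hFS, hSA, hP, hcard⟩ := hS
  have heS : e ∉ S := fun h => (Finset.mem_erase.mp (hSA h)).1 rfl
  rw [sgM_single, one_smul]
  apply Finsupp.single_mem_supported
  refine ⟨Finset.insert_subset_insert _ hFS,
    Finset.insert_subset heA (hSA.trans (Finset.erase_subset _ _)),
    by rw [part_insert_eq (S := S) hends (by rw [hP]; exact hxy)]; exact hP, ?_⟩
  have : insert e S \ insert e F = S \ F := by
    ext g
    simp only [Finset.mem_sdiff, Finset.mem_insert, not_or]
    constructor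
    · rintro ⟨hg1 | hg1, hg2, hg3⟩
      · exact absurd hg1 hg2
      · exact ⟨hg1, hg3⟩
    · rintro ⟨hg1, hg2⟩
      exact ⟨Or.inr hg1, fun h => heS (h ▸ hg1), hg2⟩
  rw [this, hcard]

lemma piM_sgM {e : E} {s : Set (Finset E)} (hs : ∀ T ∈ s, Part ends T = P ∧ e ∉ T)
    {z : Finset E →₀ ℤ} (hz : z ∈ Finsupp.supported ℤ ℤ s) :
    piM ends P e (sgM e z) = z := by
  have := map_eq_on_supported (L := (piM ends P e).comp (sgM e)) (L' := LinearMap.id)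
    (s := s) (fun T hT => ?_) hz
  · simpa using this
  · obtain ⟨hP, heT⟩ := hs T hT
    simp only [LinearMap.comp_apply, LinearMap.id_apply]
    rw [sgM_single, one_smul, piM_single, one_smul, piS,
      if_pos ⟨Finset.mem_insert_self e T, by rw [Finset.erase_insert heT]; exact hP⟩,
      Finset.erase_insert heT]

/-- π is a chain map (on basis elements of the contracted complex). -/
lemma piM_dd_single {e : E} {F S : Finset E} (heF : e ∉ F) (heS : e ∈ S)
    (hS : Part ends S = P) :
    piM ends P e (dd ends P (insert e F) (Finsupp.single S 1)) =
      dd ends P F (piM ends P e (Finsupp.single S 1)) := by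
  rw [dd_single, one_smul, ddS, map_sum, piM_single, one_smul, piS]
  by_cases hPe : Part ends (S.erase e) = P
  · rw [if_pos ⟨heS, hPe⟩, dd_single, one_smul, ddS, erase_sdiff, ← sdiff_insert']
    apply Finset.sum_congr rfl
    intro f hf
    obtain ⟨hfS, hfFe⟩ := Finset.mem_sdiff.mp hf
    have hfe : f ≠ e := fun h => hfFe (h ▸ Finset.mem_insert_self e F)
    have hswap : (S.erase f).erase e = (S.erase e).erase f := Finset.erase_right_comm
    by_cases hc : Part ends (S.erase f) = P
    · rw [if_pos hc, map_smul, piM_single, one_smul, piS]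
      by_cases h2 : Part ends ((S.erase f).erase e) = P
      · rw [if_pos ⟨Finset.mem_erase.mpr ⟨Ne.symm hfe, heS⟩, h2⟩,
          if_pos (hswap ▸ h2), hswap]
      · rw [if_neg (fun h => h2 h.2), smul_zero,
          if_neg (fun h => h2 (hswap.symm ▸ h)), eq_comm]
    · rw [if_neg hc, map_zero, eq_comm, if_neg]
      intro h
      exact hc (part_eq_sandwich (by rw [← hswap]; exact Finset.erase_subset _ _)
        (Finset.erase_subset _ _) h hS)
  · rw [if_neg (fun h => hPe h.2), map_zero]
    apply Finset.sum_eq_zero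
    intro f hf
    by_cases hc : Part ends (S.erase f) = P
    · rw [if_pos hc, map_smul, piM_single, one_smul, piS, if_neg, smul_zero]
      rintro ⟨-, h2⟩
      apply hPe
      refine part_eq_sandwich (S := (S.erase f).erase e) ?_ (Finset.erase_subset _ _) h2 hS
      rw [Finset.erase_right_comm]
      exact Finset.erase_subset _ _
    · rw [if_neg hc, map_zero]

/-- An element of the contracted complex killed by π is supported on `BSet`. -/
lemma supported_BSet_of_piM {e : E} {F A : Finset E} {j : ℕ}
    {x : Finset E →₀ ℤ}
    (hx : x ∈ Finsupp.supported ℤ ℤ (basisSet ends P (insert e F) A j))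
    (hpi : piM ends P e x = 0) :
    x ∈ Finsupp.supported ℤ ℤ (BSet ends P e F A j) := by
  rw [Finsupp.mem_supported] at hx ⊢
  intro T hT
  have hTb := hx hT
  refine ⟨hTb, fun hPe => ?_⟩
  have heT : e ∈ T := hTb.1 (Finset.mem_insert_self e F)
  have hval : piM ends P e x (T.erase e) = x T := by
    conv_lhs => rw [repr_sum x, map_sum]
    rw [Finsupp.finset_sum_apply]
    rw [Finset.sum_eq_single T]
    · rw [map_smul, piM_single, one_smul, Finsupp.smul_apply, piS, if_pos ⟨heT, hPe⟩,
        Finsupp.single_eq_same, smul_eq_mul, mul_one]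
    · intro S hS hne
      rw [map_smul, piM_single, one_smul, Finsupp.smul_apply]
      have heS : e ∈ S := (hx hS).1 (Finset.mem_insert_self e F)
      rw [piS]
      by_cases hc : e ∈ S ∧ Part ends (S.erase e) = P
      · rw [if_pos hc, Finsupp.single_apply, if_neg, smul_zero]
        intro h
        apply hne
        rw [← Finset.insert_erase heS, ← Finset.insert_erase heT, h]
      · rw [if_neg hc, Finsupp.coe_zero, Pi.zero_apply, smul_zero]
    · intro h
      exact absurd hT h
  rw [hpi] at hval
  simp only [Finsupp.coe_zero, Pi.zero_apply] at hval
  exact absurd hval.symm (Finsupp.mem_support_iff.mp hT)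

/-! ### Counting equivalence classes -/

def clR (R : V → V → Prop) : ℕ := Nat.card (Quot R)

lemma part_equivalence (ends : E → Sym2 V) (F : Finset E) : Equivalence (Part ends F) :=
  ⟨part_refl ends F, part_symm, part_trans⟩

/-- Explicit description of the partition after adding one edge joining
two distinct classes. -/
lemma part_insert_desc {ends : E → Sym2 V} {F : Finset E} {e : E} {x y : V}
    (hends : ends e = s(x, y)) :
    Part ends (insert e F) = fun a b => Part ends F a b ∨
      (Part ends F a x ∧ Part ends F y b) ∨ (Part ends F a y ∧ Part ends F x b) := by
  funext a b
  apply propext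
  constructor
  · intro h
    induction h with
    | refl => exact Or.inl (part_refl _ _ _)
    | tail _ hs ih =>
      rename_i b c _
      obtain ⟨f, hf, hfc⟩ := hs
      rcases Finset.mem_insert.mp hf with rfl | hfF
      · rw [hends] at hfc
        rcases Sym2.eq_iff.mp hfc with ⟨rfl, rfl⟩ | ⟨rfl, rfl⟩
        · rcases ih with h1 | ⟨h1, h2⟩ | ⟨h1, h2⟩
          · exact Or.inr (Or.inl ⟨h1, part_refl _ _ _⟩)
          · exact Or.inr (Or.inl ⟨h1, part_refl _ _ _⟩)
          · exact Or.inl h1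
        · rcases ih with h1 | ⟨h1, h2⟩ | ⟨h1, h2⟩
          · exact Or.inr (Or.inr ⟨h1, part_refl _ _ _⟩)
          · exact Or.inl h1
          · exact Or.inr (Or.inr ⟨h1, part_refl _ _ _⟩)
      · have hbc : Part ends F b c := part_of_mem hfF hfc
        rcases ih with h1 | ⟨h1, h2⟩ | ⟨h1, h2⟩
        · exact Or.inl (part_trans h1 hbc)
        · exact Or.inr (Or.inl ⟨h1, part_trans h2 hbc⟩)
        · exact Or.inr (Or.inr ⟨h1, part_trans h2 hbc⟩)
  · intro h
    have hxy : Part ends (insert e F) x y :=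
      part_of_mem (Finset.mem_insert_self e F) hends
    have hmono : ∀ u v, Part ends F u v → Part ends (insert e F) u v :=
      fun u v h' => part_mono (Finset.subset_insert _ _) h'
    rcases h with h1 | ⟨h1, h2⟩ | ⟨h1, h2⟩
    · exact hmono _ _ h1
    · exact part_trans (hmono _ _ h1) (part_trans hxy (hmono _ _ h2))
    · exact part_trans (hmono _ _ h1) (part_trans (part_symm hxy) (hmono _ _ h2))

lemma clR_insert [Fintype V] {ends : E → Sym2 V} {F : Finset E} {e : E} {x y : V}
    (hends : ends e = s(x, y)) (hn : ¬ Part ends F x y) :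
    clR (Part ends (insert e F)) + 1 = clR (Part ends F) := by
  classical
  set R := Part ends F with hR
  have hRe : Equivalence R := part_equivalence ends F
  have hq : ∀ a b : V, Quot.mk R a = Quot.mk R b ↔ R a b := by
    intro a b
    rw [Quot.eq]
    exact hRe.eqvGen_iff
  have hxny : (Quot.mk R x : Quot R) ≠ Quot.mk R y := fun h => hn ((hq x y).mp h)
  -- the map from V to the classes distinct from that of y
  set g : V → {z : Quot R // z ≠ Quot.mk R y} := fun a =>
    if h : R a y then ⟨Quot.mk R x, hxny⟩
    else ⟨Quot.mk R a, fun hh => h ((hq a y).mp hh)⟩ with hg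
  have key := part_insert_desc (F := F) hends
  have resp : ∀ a b, Part ends (insert e F) a b → g a = g b := by
    intro a b hab
    rw [key] at hab
    rcases hab with h1 | ⟨h1, h2⟩ | ⟨h1, h2⟩
    · by_cases hay : R a y
      · rw [hg]
        have hby : R b y := hRe.trans (hRe.symm h1) hay
        simp only [dif_pos hay, dif_pos hby]
      · have hby : ¬ R b y := fun hh => hay (hRe.trans h1 hh)
        rw [hg]
        simp only [dif_neg hay, dif_neg hby]
        exact Subtype.ext ((hq a b).mpr h1)
    · -- R a x, R y b
      have hby : R b y := hRe.symm h2
      have hay : ¬ R a y := fun hh => hn (hRe.trans (hRe.symm h1) hh)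
      rw [hg]
      simp only [dif_neg hay, dif_pos hby]
      exact Subtype.ext ((hq a x).mpr h1)
    · -- R a y, R x b
      have hay : R a y := h1
      have hby : ¬ R b y := fun hh => hn (hRe.trans h2 hh)
      rw [hg]
      simp only [dif_pos hay, dif_neg hby]
      exact Subtype.ext ((hq x b).mpr h2)
  set G : Quot (Part ends (insert e F)) → {z : Quot R // z ≠ Quot.mk R y} :=
    Quot.lift g resp with hG
  have hGsurj : Function.Surjective G := by
    rintro ⟨z, hz⟩
    obtain ⟨a, rfl⟩ := Quot.exists_rep z
    have hay : ¬ R a y := fun h => hz ((hq a y).mpr h)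
    refine ⟨Quot.mk _ a, ?_⟩
    show g a = _
    rw [hg]
    simp only [dif_neg hay]
  have hGinj : Function.Injective G := by
    intro u v
    induction u using Quot.ind with | _ a =>
    induction v using Quot.ind with | _ b =>
    intro hab
    have hab' : g a = g b := hab
    apply Quot.sound
    rw [key]
    by_cases hay : R a y <;> by_cases hby : R b y
    · exact Or.inl (hRe.trans hay (hRe.symm hby))
    · rw [hg] at hab'
      simp only [dif_pos hay, dif_neg hby] at hab'
      have : Quot.mk R x = Quot.mk R b := congrArg Subtype.val hab'
      exact Or.inr (Or.inr ⟨hay, (hq x b).mp this⟩)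
    · rw [hg] at hab'
      simp only [dif_neg hay, dif_pos hby] at hab'
      have : Quot.mk R a = Quot.mk R x := congrArg Subtype.val hab'
      exact Or.inr (Or.inl ⟨(hq a x).mp this, hRe.symm hby⟩)
    · rw [hg] at hab'
      simp only [dif_neg hay, dif_neg hby] at hab'
      have : Quot.mk R a = Quot.mk R b := congrArg Subtype.val hab'
      exact Or.inl ((hq a b).mp this)
  have hcard1 : clR (Part ends (insert e F)) =
      Nat.card {z : Quot R // z ≠ Quot.mk R y} :=
    Nat.card_congr (Equiv.ofBijective G ⟨hGinj, hGsurj⟩)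
  have hcard2 : clR R = Nat.card {z : Quot R // z ≠ Quot.mk R y} + 1 := by
    have : Nat.card (Quot R) = Nat.card (Option {z : Quot R // z ≠ Quot.mk R y}) :=
      Nat.card_congr (Equiv.optionSubtypeNe (Quot.mk R y)).symm
    rw [clR, this, Finite.card_option]
  rw [hcard1, hcard2]

lemma clR_empty [Fintype V] (ends : E → Sym2 V) :
    clR (Part ends (∅ : Finset E)) = Fintype.card V := by
  have hEq : Quot (Part ends (∅ : Finset E)) ≃ V := by
    refine ⟨Quot.lift id (fun a b h => (part_empty ends a b).mp h), Quot.mk _, ?_, fun a => rfl⟩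
    intro z
    induction z using Quot.ind with | _ a => rfl
  rw [clR, Nat.card_congr hEq, Nat.card_eq_fintype_card]

lemma clR_top [Fintype V] (hV : Nonempty V) :
    clR (fun _ _ : V => True) = 1 := by
  have h1 : Subsingleton (Quot (fun _ _ : V => True)) := by
    constructor
    intro a b
    induction a using Quot.ind with | _ a =>
    induction b using Quot.ind with | _ b =>
    exact Quot.sound trivial
  have h2 : Nonempty (Quot (fun _ _ : V => True)) := ⟨Quot.mk _ hV.some⟩
  rw [clR]
  exact Nat.card_eq_one_iff_unique.mpr ⟨h1, h2⟩

lemma insert_sdiff_insert' {e : E} {X F : Finset E} (he : e ∉ X) :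
    insert e X \ insert e F = X \ F := by
  ext g
  simp only [Finset.mem_sdiff, Finset.mem_insert, not_or]
  constructor
  · rintro ⟨hg1 | hg1, hg2, hg3⟩
    · exact absurd hg1 hg2
    · exact ⟨hg1, hg3⟩
  · rintro ⟨hg1, hg2⟩
    exact ⟨Or.inr hg1, fun h => he (h ▸ hg1), hg2⟩

/-- π intertwines the differentials, on supported elements. -/
lemma piM_dd {e : E} {F : Finset E} (heF : e ∉ F) {s : Set (Finset E)}
    (hs : ∀ S ∈ s, e ∈ S ∧ Part ends S = P)
    {z : Finset E →₀ ℤ} (hz : z ∈ Finsupp.supported ℤ ℤ s) :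
    piM ends P e (dd ends P (insert e F) z) = dd ends P F (piM ends P e z) := by
  have := map_eq_on_supported (L := (piM ends P e).comp (dd ends P (insert e F)))
    (L' := (dd ends P F).comp (piM ends P e))
    (fun S hS => by
      simp only [LinearMap.comp_apply]
      exact piM_dd_single heF (hs S hS).1 (hs S hS).2) hz
  simpa using this

/-! ### The master acyclicity theorem -/

theorem master [Fintype V] (k : ℕ) :
    ∀ (ends : E → Sym2 V) (P : V → V → Prop) (F A : Finset E),
      F ⊆ A → (A \ F).card ≤ k →
      ∀ j : ℕ, j + clR P ≠ clR (Part ends F) →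
      ∀ z ∈ Finsupp.supported ℤ ℤ (basisSet ends P F A j), dd ends P F z = 0 →
      ∃ w ∈ Finsupp.supported ℤ ℤ (basisSet ends P F A (j + 1)), dd ends P F w = z := by
  have base : ∀ (ends : E → Sym2 V) (P : V → V → Prop) (F A : Finset E), F ⊆ A → A = F →
      ∀ j : ℕ, j + clR P ≠ clR (Part ends F) →
      ∀ z ∈ Finsupp.supported ℤ ℤ (basisSet ends P F A j), dd ends P F z = 0 →
      ∃ w ∈ Finsupp.supported ℤ ℤ (basisSet ends P F A (j + 1)), dd ends P F w = z := by
    intro ends P F A hFA hAF j hj z hz _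
    have hempty : basisSet ends P F A j = ∅ := by
      ext S
      simp only [basisSet, Set.mem_setOf_eq, Set.mem_empty_iff_false, iff_false]
      rintro ⟨hFS, hSA, hP, hc⟩
      have hSeq : S = F := Finset.Subset.antisymm (hAF ▸ hSA) hFS
      subst hSeq
      rw [Finset.sdiff_self, Finset.card_empty] at hc
      apply hj
      rw [← hc, hP, Nat.zero_add]
    rw [hempty, Finsupp.supported_empty, Submodule.mem_bot] at hz
    subst hz
    exact ⟨0, Submodule.zero_mem _, map_zero _⟩
  induction k with
  | zero =>
    intro ends P F A hFA hcard j hj z hz hdz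
    have hAF : A = F := by
      apply Finset.Subset.antisymm _ hFA
      intro g hg
      by_contra hng
      have : g ∈ A \ F := Finset.mem_sdiff.mpr ⟨hg, hng⟩
      have h0 : A \ F = ∅ := Finset.card_eq_zero.mp (Nat.le_zero.mp hcard)
      rw [h0] at this
      exact absurd this (Finset.notMem_empty g)
    exact base ends P F A hFA hAF j hj z hz hdz
  | succ k IH =>
    intro ends P F A hFA hcard j hj z hz hdz
    by_cases hAF : A = F
    · exact base ends P F A hFA hAF j hj z hz hdz
    have hne : (A \ F).Nonempty := by
      rw [Finset.sdiff_nonempty]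
      intro h
      exact hAF (Finset.Subset.antisymm h hFA)
    set e := (A \ F).max' hne with he_def
    have heAF : e ∈ A \ F := Finset.max'_mem _ hne
    have heA : e ∈ A := (Finset.mem_sdiff.mp heAF).1
    have heF : e ∉ F := (Finset.mem_sdiff.mp heAF).2
    have hlt : ∀ f ∈ A \ F, f ≠ e → f < e :=
      fun f hf hne' => lt_of_le_of_ne (Finset.le_max' _ f hf) hne'
    obtain ⟨⟨x, y⟩, hp⟩ := Quot.exists_rep (ends e)
    have hends : ends e = s(x, y) := hp.symm
    have hcard_erase : ((A \ F).erase e).card ≤ k := by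
      have := Finset.card_erase_add_one heAF
      omega
    by_cases hPxy : P x y
    · by_cases hFxy : Part ends F x y
      · -- "loop" case: the homotopy is exact on the nose
        refine ⟨hh e F z, hh_deg hends hPxy heA heF hz, ?_⟩
        have hid := map_eq_on_supported
          (L := (dd ends P F).comp (hh e F) + (hh e F).comp (dd ends P F))
          (L' := LinearMap.id) (s := basisSet ends P F A j) ?_ hz
        · simp only [LinearMap.add_apply, LinearMap.comp_apply, LinearMap.id_apply] at hid
          rw [hdz, map_zero, add_zero] at hid
          exact hid
        · intro S hS
          obtain ⟨hFS, hSA, hP, hc⟩ := hS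
          simp only [LinearMap.add_apply, LinearMap.comp_apply, LinearMap.id_apply]
          have hlt' : ∀ f ∈ S \ F, f ≠ e → f < e :=
            fun f hf h => hlt f (Finset.sdiff_subset_sdiff hSA (le_refl F) hf) h
          by_cases heS : e ∈ S
          · rw [keyA heS heF hlt', if_pos]
            have hFe : F ⊆ S.erase e :=
              fun g hg => Finset.mem_erase.mpr ⟨fun h => heF (h ▸ hg), hFS hg⟩
            have h2 := part_insert_eq (S := S.erase e) hends (part_mono hFe hFxy)
            rw [Finset.insert_erase heS] at h2
            rw [← h2, hP]
          · have hlt'' : ∀ f ∈ S \ F, f < e :=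
              fun f hf => hlt' f hf (fun h => heS (h ▸ (Finset.mem_sdiff.mp hf).1))
            rw [keyB hends hPxy heS heF hP hlt'']
            rw [Finset.sum_eq_zero, add_zero]
            intro f hf
            rw [if_neg]
            rintro ⟨hA', hB'⟩
            apply hB'
            have hFef : F ⊆ S.erase f :=
              fun g hg => Finset.mem_erase.mpr
                ⟨fun h => (Finset.mem_sdiff.mp hf).2 (h ▸ hg), hFS hg⟩
            rw [← part_insert_eq (S := S.erase f) hends (part_mono hFef hFxy)]
            exact hA'
      · -- contraction case
        rcases j with _ | j₀
        · -- degree 0 is impossible here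
          have hempty : basisSet ends P F A 0 = ∅ := by
            ext S
            simp only [basisSet, Set.mem_setOf_eq, Set.mem_empty_iff_false, iff_false]
            rintro ⟨hFS, hSA, hP, hc⟩
            have hSF : S = F := by
              apply Finset.Subset.antisymm _ hFS
              intro g hg
              by_contra hng
              have hmem : g ∈ S \ F := Finset.mem_sdiff.mpr ⟨hg, hng⟩
              rw [Finset.card_eq_zero.mp hc] at hmem
              exact absurd hmem (Finset.notMem_empty g)
            subst hSF
            rw [hP] at hFxy
            exact hFxy hPxy
          rw [hempty, Finsupp.supported_empty, Submodule.mem_bot] at hz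
          subst hz
          exact ⟨0, Submodule.zero_mem _, map_zero _⟩
        · -- the real case: contract e
          set L' : (Finset E →₀ ℤ) →ₗ[ℤ] (Finset E →₀ ℤ) :=
            LinearMap.id - ((dd ends P F).comp (hh e F) + (hh e F).comp (dd ends P F))
            with hL'def
          set q : Finset E →₀ ℤ := L' z with hq_def
          have hq_eq : q = z - dd ends P F (hh e F z) := by
            rw [hq_def, hL'def]
            simp only [LinearMap.sub_apply, LinearMap.add_apply, LinearMap.comp_apply,
              LinearMap.id_apply]
            rw [hdz, map_zero, add_zero]
          -- q is supported on BSet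
          have hq_supp : q ∈ Finsupp.supported ℤ ℤ (BSet ends P e F A j₀) := by
            refine map_mem_supported (fun S hS => ?_) hz
            obtain ⟨hFS, hSA, hP, hc⟩ := hS
            have hlt' : ∀ f ∈ S \ F, f ≠ e → f < e :=
              fun f hf h => hlt f (Finset.sdiff_subset_sdiff hSA (le_refl F) hf) h
            have hL'S : L' (Finsupp.single S 1) = Finsupp.single S 1 -
                (dd ends P F (hh e F (Finsupp.single S 1)) +
                  hh e F (dd ends P F (Finsupp.single S 1))) := by
              rw [hL'def]
              simp only [LinearMap.sub_apply, LinearMap.add_apply, LinearMap.comp_apply,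
                LinearMap.id_apply]
            by_cases heS : e ∈ S
            · rw [hL'S, keyA heS heF hlt']
              by_cases hcond : Part ends (S.erase e) = P
              · rw [if_pos hcond, sub_self]
                exact Submodule.zero_mem _
              · rw [if_neg hcond, sub_zero]
                apply Finsupp.single_mem_supported
                refine ⟨⟨Finset.insert_subset heS hFS, hSA, hP, ?_⟩, hcond⟩
                rw [sdiff_insert', Finset.card_erase_of_mem
                  (Finset.mem_sdiff.mpr ⟨heS, heF⟩), hc]
                rfl
            · have hlt'' : ∀ f ∈ S \ F, f < e :=
                fun f hf => hlt' f hf (fun h => heS (h ▸ (Finset.mem_sdiff.mp hf).1))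
              rw [hL'S, keyB hends hPxy heS heF hP hlt'', sub_add_eq_sub_sub, sub_self,
                zero_sub]
              apply Submodule.neg_mem
              apply Submodule.sum_mem
              intro f hf
              obtain ⟨hfS, hfF⟩ := Finset.mem_sdiff.mp hf
              by_cases hcond : Part ends (insert e (S.erase f)) = P ∧
                  ¬ Part ends (S.erase f) = P
              · rw [if_pos hcond]
                apply Submodule.smul_mem
                apply Finsupp.single_mem_supported
                have heSf : e ∉ S.erase f := fun h => heS (Finset.mem_of_mem_erase h)
                refine ⟨⟨?_, Finset.insert_subset heA
                    ((Finset.erase_subset _ _).trans hSA), hcond.1, ?_⟩, ?_⟩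
                · apply Finset.insert_subset_insert
                  exact fun g hg => Finset.mem_erase.mpr ⟨fun h => hfF (h ▸ hg), hFS hg⟩
                · rw [insert_sdiff_insert' heSf, erase_sdiff,
                    Finset.card_erase_of_mem hf, hc]
                  rfl
                · rw [Finset.erase_insert heSf]
                  exact hcond.2
              · rw [if_neg hcond]
                exact Submodule.zero_mem _
          -- q is a cycle for the contracted differential
          have hhz_P : hh e F z ∈ Finsupp.supported ℤ ℤ {S : Finset E | Part ends S = P} := by
            refine Finsupp.supported_mono ?_ (hh_deg hends hPxy heA heF hz)
            rintro S ⟨_, _, hP, _⟩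
            exact hP
          have hq_cycF : dd ends P F q = 0 := by
            rw [hq_eq, map_sub, hdz, dd_dd hhz_P, zero_sub, neg_eq_zero]
          have hq_cyc : dd ends P (insert e F) q = 0 := by
            rw [← dd_eq_on_BSet heF hlt hq_supp]
            exact hq_cycF
          -- apply IH for the contracted graph
          have hMcard : (A \ insert e F).card ≤ k := by
            rw [sdiff_insert']
            exact hcard_erase
          have hMdeg : j₀ + clR P ≠ clR (Part ends (insert e F)) := by
            have h3 := clR_insert hends hFxy
            omega
          obtain ⟨u, hu_supp, hu⟩ := IH ends P (insert e F) A
            (Finset.insert_subset heA hFA) hMcard j₀ hMdeg q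
            (Finsupp.supported_mono (fun S hS => hS.1) hq_supp) hq_cyc
          -- push down with π
          have hMmem : ∀ S ∈ basisSet ends P (insert e F) A (j₀ + 1),
              e ∈ S ∧ Part ends S = P :=
            fun S hS => ⟨hS.1 (Finset.mem_insert_self e F), hS.2.2.1⟩
          have hpiu_supp : piM ends P e u ∈
              Finsupp.supported ℤ ℤ (basisSet ends P F (A.erase e) (j₀ + 1)) :=
            piM_deg heF hu_supp
          have hpiu_cyc : dd ends P F (piM ends P e u) = 0 := by
            rw [← piM_dd heF hMmem hu_supp, hu]
            exact piM_kill_BSet hq_supp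
          have hNsub : F ⊆ A.erase e :=
            fun g hg => Finset.mem_erase.mpr ⟨fun h => heF (h ▸ hg), hFA hg⟩
          have hNcard : (A.erase e \ F).card ≤ k := by
            rw [erase_sdiff]
            exact hcard_erase
          obtain ⟨v, hv_supp, hv⟩ := IH ends P F (A.erase e) hNsub hNcard (j₀ + 1) hj
            (piM ends P e u) hpiu_supp hpiu_cyc
          -- correct u by σ v
          have hsgv_supp : sgM e v ∈
              Finsupp.supported ℤ ℤ (basisSet ends P (insert e F) A (j₀ + 2)) :=
            sgM_deg hends hPxy heA hv_supp
          set u' : Finset E →₀ ℤ := u - dd ends P (insert e F) (sgM e v) with hu'_def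
          have hsgv_P : sgM e v ∈
              Finsupp.supported ℤ ℤ {S : Finset E | Part ends S = P} :=
            Finsupp.supported_mono (fun S hS => hS.2.2.1) hsgv_supp
          have hu'_d : dd ends P (insert e F) u' = q := by
            rw [hu'_def, map_sub, hu, dd_dd hsgv_P, sub_zero]
          have hu'_supp0 : u' ∈
              Finsupp.supported ℤ ℤ (basisSet ends P (insert e F) A (j₀ + 1)) :=
            Submodule.sub_mem _ hu_supp (dd_deg hsgv_supp)
          have hMmem2 : ∀ S ∈ basisSet ends P (insert e F) A (j₀ + 2),
              e ∈ S ∧ Part ends S = P :=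
            fun S hS => ⟨hS.1 (Finset.mem_insert_self e F), hS.2.2.1⟩
          have hpi_u' : piM ends P e u' = 0 := by
            rw [hu'_def, map_sub, piM_dd heF hMmem2 hsgv_supp,
              piM_sgM (fun T hT => ⟨hT.2.2.1,
                fun h => (Finset.mem_erase.mp (hT.2.1 h)).1 rfl⟩) hv_supp, hv, sub_self]
          have hu'_supp : u' ∈ Finsupp.supported ℤ ℤ (BSet ends P e F A (j₀ + 1)) :=
            supported_BSet_of_piM hu'_supp0 hpi_u'
          -- assemble
          refine ⟨hh e F z + u', ?_, ?_⟩
          · exact Submodule.add_mem _ (hh_deg hends hPxy heA heF hz)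
              (Finsupp.supported_mono (BSet_subset_basisF heF) hu'_supp)
          · rw [map_add, dd_eq_on_BSet heF hlt hu'_supp, hu'_d, hq_eq]
            abel
    · -- e cannot occur in any basis element
      have hbasis : ∀ j' : ℕ, basisSet ends P F A j' = basisSet ends P F (A.erase e) j' := by
        intro j'
        ext S
        constructor
        · rintro ⟨hFS, hSA, hP, hc⟩
          have heS : e ∉ S := by
            intro h
            apply hPxy
            rw [← hP]
            exact part_of_mem h hends
          exact ⟨hFS, fun g hg => Finset.mem_erase.mpr ⟨fun hh => heS (hh ▸ hg), hSA hg⟩,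
            hP, hc⟩
        · rintro ⟨hFS, hSA, hP, hc⟩
          exact ⟨hFS, hSA.trans (Finset.erase_subset _ _), hP, hc⟩
      have hNsub : F ⊆ A.erase e :=
        fun g hg => Finset.mem_erase.mpr ⟨fun h => heF (h ▸ hg), hFA hg⟩
      have hNcard : (A.erase e \ F).card ≤ k := by
        rw [erase_sdiff]
        exact hcard_erase
      rw [hbasis j] at hz
      obtain ⟨w, hw_supp, hw⟩ := IH ends P F (A.erase e) hNsub hNcard j hj z hz hdz
      rw [← hbasis (j + 1)] at hw_supp
      exact ⟨w, hw_supp, hw⟩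

/-! ### Bridge to the complex of connected subgraphs -/

section Bridge

variable (ends : E → Sym2 V)

/-- The inclusion of the chain group of `C_conn` into the big free module. -/
def emb (i : ℕ) : CConn ends i →ₗ[ℤ] (Finset E →₀ ℤ) :=
  Finsupp.lmapDomain ℤ ℤ (fun S : ConnSub ends i => S.1)

lemma emb_single (i : ℕ) (T : ConnSub ends i) (c : ℤ) :
    emb ends i (Finsupp.single T c) = Finsupp.single T.1 c := by
  simp [emb, Finsupp.mapDomain_single]

lemma emb_inj (i : ℕ) : Function.Injective (emb ends i) :=
  Finsupp.mapDomain_injective (fun a b h => Subtype.ext h)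

lemma emb_supported [Fintype E] (i : ℕ) (a : CConn ends i) :
    emb ends i a ∈ Finsupp.supported ℤ ℤ
      (basisSet ends (fun _ _ => True) ∅ (Finset.univ : Finset E) i) := by
  classical
  rw [Finsupp.mem_supported]
  intro S hS
  have hS2 := Finsupp.mapDomain_support (Finset.mem_coe.mp hS)
  rw [Finset.mem_image] at hS2
  obtain ⟨T, _, rfl⟩ := hS2
  refine ⟨Finset.empty_subset _, Finset.subset_univ _, isConn_iff_part.mp T.2.2, ?_⟩
  rw [Finset.sdiff_empty]
  exact T.2.1

lemma emb_surj_on [Fintype E] (i : ℕ) (w : Finset E →₀ ℤ)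
    (hw : w ∈ Finsupp.supported ℤ ℤ
      (basisSet ends (fun _ _ => True) ∅ (Finset.univ : Finset E) i)) :
    ∃ b : CConn ends i, emb ends i b = w := by
  have hinj : Function.Injective (fun S : ConnSub ends i => S.1) :=
    fun a b h => Subtype.ext h
  have hrange : ↑w.support ⊆ Set.range (fun S : ConnSub ends i => S.1) := by
    intro S hS
    obtain ⟨_, _, hP, hc⟩ := hw hS
    rw [Finset.sdiff_empty] at hc
    exact ⟨⟨S, hc, isConn_iff_part.mpr hP⟩, rfl⟩
  refine ⟨Finsupp.comapDomain _ w hinj.injOn, ?_⟩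
  show Finsupp.mapDomain _ _ = w
  exact Finsupp.mapDomain_comapDomain _ hinj w hrange

lemma bdry_single (i : ℕ) (T : ConnSub ends i.succ) (c : ℤ) :
    bdry ends i (Finsupp.single T c) =
      c • (∑ e ∈ T.1.attach,
        if h : IsConn ends (T.1.erase e.1) then
          ((-1 : ℤ) ^ nuEdge e.1 T.1) •
            Finsupp.single
              (⟨T.1.erase e.1, by simp [Finset.card_erase_of_mem e.2, T.2.1], h⟩ :
                ConnSub ends i) 1
        else 0) := by
  simp [bdry, LinearMap.toSpanSingleton_apply]
  congr 1
  apply Finset.sum_congr rfl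
  intro x _
  split_ifs
  · exact Finsupp.smul_single_one _ _
  · rfl

lemma emb_dd (i : ℕ) (a : CConn ends (i + 1)) :
    dd ends (fun _ _ => True) ∅ (emb ends (i + 1) a) = emb ends i (bdry ends i a) := by
  suffices h : (dd ends (fun _ _ => True) ∅).comp (emb ends (i + 1)) =
      (emb ends i).comp (bdry ends i) by
    exact LinearMap.congr_fun h a
  apply Finsupp.lhom_ext
  intro T c
  simp only [LinearMap.comp_apply]
  rw [emb_single, dd_single, bdry_single]
  erw [map_smul]
  congr 1
  erw [ddS, map_sum, Finset.sdiff_empty, ← Finset.sum_attach T.1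
    (fun f => if Part ends (T.1.erase f) = (fun _ _ => True) then
      ((-1 : ℤ) ^ nuEdge f T.1) • Finsupp.single (T.1.erase f) 1 else 0)]
  apply Finset.sum_congr rfl
  intro f _
  by_cases hcon : IsConn ends (T.1.erase f.1)
  · rw [if_pos (isConn_iff_part.mp hcon), dif_pos hcon]
    erw [map_smul, emb_single]
  · rw [if_neg (fun h => hcon (isConn_iff_part.mpr h)), dif_neg hcon]
    erw [map_zero]

lemma dd_deg_zero {P : V → V → Prop} {F A : Finset E} {z : Finset E →₀ ℤ}
    (hz : z ∈ Finsupp.supported ℤ ℤ (basisSet ends P F A 0)) :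
    dd ends P F z = 0 := by
  refine map_eq_zero_on_supported (fun S hS => ?_) hz
  rw [dd_single, one_smul, ddS, Finset.card_eq_zero.mp hS.2.2.2, Finset.sum_empty]

end Bridge

end CCX

theorem homology_concentrated_in_top_degree
    [Fintype V] [DecidableEq V] [Fintype E] [LinearOrder E]
    (ends : E → Sym2 V) (hconn : IsConn ends (Finset.univ : Finset E)) :
    ((0 : ℕ) ≠ Fintype.card V - 1 → Subsingleton (ConnH0 ends)) ∧
      ∀ i : ℕ, i + 1 ≠ Fintype.card V - 1 → Subsingleton (ConnH ends i) := by
  classical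
  have hclF : CCX.clR (CCX.Part ends (∅ : Finset E)) = Fintype.card V := CCX.clR_empty ends
  constructor
  · -- H₀
    intro h0
    have hn2 : 2 ≤ Fintype.card V := by omega
    have hV : Nonempty V := by
      rw [← Fintype.card_pos_iff]
      omega
    have hclP : CCX.clR (fun _ _ : V => True) = 1 := CCX.clR_top hV
    rw [Submodule.Quotient.subsingleton_iff, eq_top_iff]
    intro z _
    obtain ⟨w, hw_supp, hw⟩ := CCX.master (V := V) (E := E)
      ((Finset.univ : Finset E) \ ∅).card ends (fun _ _ => True) ∅ Finset.univ
      (Finset.empty_subset _) (le_refl _) 0 (by rw [hclP, hclF]; omega)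
      (CCX.emb ends 0 z) (CCX.emb_supported ends 0 z)
      (CCX.dd_deg_zero ends (CCX.emb_supported ends 0 z))
    obtain ⟨b, hb⟩ := CCX.emb_surj_on ends 1 w hw_supp
    refine LinearMap.mem_range.mpr ⟨b, ?_⟩
    apply CCX.emb_inj ends 0
    rw [← CCX.emb_dd ends 0 b, hb, hw]
  · -- H_{i+1}
    intro i hi
    by_cases hV : Nonempty V
    · have hn1 : 1 ≤ Fintype.card V := Fintype.card_pos_iff.mpr hV
      have hclP : CCX.clR (fun _ _ : V => True) = 1 := CCX.clR_top hV
      rw [Submodule.Quotient.subsingleton_iff, eq_top_iff]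
      intro x _
      have hx : bdry ends i x.1 = 0 := x.2
      have hcyc : CCX.dd ends (fun _ _ => True) ∅ (CCX.emb ends (i + 1) x.1) = 0 := by
        rw [CCX.emb_dd, hx, map_zero]
      obtain ⟨w, hw_supp, hw⟩ := CCX.master (V := V) (E := E)
        ((Finset.univ : Finset E) \ ∅).card ends (fun _ _ => True) ∅ Finset.univ
        (Finset.empty_subset _) (le_refl _) (i + 1) (by rw [hclP, hclF]; omega)
        (CCX.emb ends (i + 1) x.1) (CCX.emb_supported ends (i + 1) x.1) hcyc
      obtain ⟨b, hb⟩ := CCX.emb_surj_on ends (i + 2) w hw_supp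
      refine Submodule.mem_comap.mpr (LinearMap.mem_range.mpr ⟨b, ?_⟩)
      apply CCX.emb_inj ends (i + 1)
      rw [← CCX.emb_dd ends (i + 1) b, hb, hw]
      rfl
    · -- V empty: everything is trivial
      have hE : IsEmpty E := ⟨fun e => by
        obtain ⟨⟨a, b⟩, _⟩ := Quot.exists_rep (ends e)
        exact hV ⟨a⟩⟩
      have hcs : IsEmpty (ConnSub ends (i + 1)) := ⟨fun S => by
        have hc := S.2.1
        have hS0 : S.1 = ∅ := Finset.eq_empty_of_isEmpty S.1
        rw [hS0, Finset.card_empty] at hc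
        exact Nat.succ_ne_zero i hc.symm⟩
      have hsub : Subsingleton (CConn ends (i + 1)) := by
        constructor
        intro a b
        ext s
        exact isEmptyElim s
      have hker : Subsingleton (LinearMap.ker (bdry ends i)) := by
        constructor
        intro a b
        exact Subtype.ext (Subsingleton.elim a.1 b.1)
      constructor
      intro a b
      refine Quotient.inductionOn₂' a b (fun u v => ?_)
      rw [Subsingleton.elim u v]

end
end

section
/- If a connected multigraph Γ contains a loop (an edge whose two endpoints coincide), then the homology of C_conn(Γ) is trivial: H_i(C_conn(Γ)) = 0 for every i. -/
/-!
Statement 10. If a connected multigraph `Γ` contains a loop (an edge whose two endpoints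
coincide), then the homology of the complex of connected subgraphs `C_conn(Γ)` is trivial:
`H_i(C_conn(Γ)) = 0` for every `i`.
-/

noncomputable section

open scoped Classical

variable {V E : Type}

attribute [reducible] ConnSub

-- lemmas from t1/t2
lemma isConn_mono {ends : E → Sym2 V} {S T : Finset E} (hST : S ⊆ T) (h : IsConn ends S) :
    IsConn ends T := fun a b =>
  Relation.ReflTransGen.mono (fun _ _ ⟨e, he, hx⟩ => ⟨e, hST he, hx⟩) _ _ (h a b)

lemma isConn_erase_loop [DecidableEq E] {ends : E → Sym2 V} {e₀ : E}
    (hloop : (ends e₀).IsDiag) {S : Finset E} (h : IsConn ends S) :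
    IsConn ends (S.erase e₀) := by
  intro a b
  have key : ∀ x y, StepRel ends S x y → Relation.ReflTransGen (StepRel ends (S.erase e₀)) x y := by
    rintro x y ⟨e, he, hxy⟩
    by_cases hee : e = e₀
    · subst hee
      rw [hxy] at hloop
      rw [Sym2.mk_isDiag_iff] at hloop
      subst hloop; exact Relation.ReflTransGen.refl
    · exact Relation.ReflTransGen.single ⟨e, Finset.mem_erase.2 ⟨hee, he⟩, hxy⟩
  induction h a b with
  | refl => exact Relation.ReflTransGen.refl
  | tail _ hs ih => exact ih.trans (key _ _ hs)

lemma isConn_insert_loop_iff [DecidableEq E] {ends : E → Sym2 V} {e₀ : E}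
    (hloop : (ends e₀).IsDiag) {S : Finset E} :
    IsConn ends (insert e₀ S) ↔ IsConn ends S := by
  constructor
  · intro h
    by_cases he : e₀ ∈ S
    · rwa [Finset.insert_eq_self.2 he] at h
    · have := isConn_erase_loop hloop h
      rwa [Finset.erase_insert he] at this
  · exact isConn_mono (Finset.subset_insert _ _)

lemma nuEdge_insert_self [DecidableEq E] [LinearOrder E] (e₀ : E) (S : Finset E) :
    nuEdge e₀ (insert e₀ S) = nuEdge e₀ S := by
  unfold nuEdge
  rw [Finset.filter_insert, if_neg (lt_irrefl e₀)]

lemma nuEdge_erase_self [DecidableEq E] [LinearOrder E] (e₀ : E) (S : Finset E) :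
    nuEdge e₀ (S.erase e₀) = nuEdge e₀ S := by
  unfold nuEdge
  rw [Finset.filter_erase, Finset.erase_eq_of_notMem]
  simp

lemma nuEdge_insert_of_not_mem [DecidableEq E] [LinearOrder E] {e₀ e : E} {S : Finset E} (h : e₀ ∉ S) :
    nuEdge e (insert e₀ S) = nuEdge e S + (if e₀ < e then 1 else 0) := by
  unfold nuEdge
  rw [Finset.filter_insert]
  split
  · rw [Finset.card_insert_of_notMem (fun hc => h (Finset.mem_of_mem_filter _ hc))]
  · simp

lemma nuEdge_erase [DecidableEq E] [LinearOrder E] {e₀ e : E} {S : Finset E} (h : e ∈ S) :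
    nuEdge e₀ (S.erase e) + (if e < e₀ then 1 else 0) = nuEdge e₀ S := by
  unfold nuEdge
  rw [Finset.filter_erase]
  split
  · next hlt =>
    have hm : e ∈ S.filter fun f => f < e₀ := Finset.mem_filter.2 ⟨h, hlt⟩
    rw [Finset.card_erase_of_mem hm]
    have : 0 < (S.filter fun f => f < e₀).card := Finset.card_pos.2 ⟨e, hm⟩
    omega
  · next hlt =>
    have hnm : e ∉ S.filter fun f => f < e₀ := fun hc => hlt (Finset.mem_filter.1 hc).2
    rw [Finset.erase_eq_of_notMem hnm]
    simp

lemma sign_key [DecidableEq E] [LinearOrder E] {e₀ e : E} {S : Finset E} (he : e ∈ S) (h0 : e₀ ∉ S)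
    (hne : e ≠ e₀) :
    ((-1 : ℤ) ^ nuEdge e₀ S) * ((-1 : ℤ) ^ nuEdge e (insert e₀ S)) =
      -(((-1 : ℤ) ^ nuEdge e S) * ((-1 : ℤ) ^ nuEdge e₀ (S.erase e))) := by
  rw [nuEdge_insert_of_not_mem h0]
  have h2 := nuEdge_erase (e₀ := e₀) he
  rcases lt_or_gt_of_ne hne with h | h
  · rw [if_neg (asymm h)] at *
    rw [if_pos h] at h2
    rw [← h2]
    ring
  · rw [if_pos h]
    rw [if_neg (asymm h)] at h2
    rw [← h2]
    ring

/-- The contracting homotopy: wedge with the loop `e₀`. -/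
noncomputable def hmt [DecidableEq E] [LinearOrder E] (ends : E → Sym2 V) (e₀ : E) (i : ℕ) :
    CConn ends i →ₗ[ℤ] CConn ends (i + 1) :=
  Finsupp.lsum ℤ fun S : ConnSub ends i =>
    LinearMap.toSpanSingleton ℤ (CConn ends (i + 1))
      (if h : e₀ ∉ S.1 then
        ((-1 : ℤ) ^ nuEdge e₀ S.1) •
          Finsupp.single
            (⟨insert e₀ S.1, by
                simp [Finset.card_insert_of_notMem h, S.2.1],
              isConn_mono (Finset.subset_insert _ _) S.2.2⟩ : ConnSub ends (i + 1)) 1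
      else 0)

lemma bdry_single [DecidableEq E] [LinearOrder E] (ends : E → Sym2 V) (i : ℕ)
    (S : ConnSub ends (i + 1)) :
    bdry ends i (Finsupp.single S 1) =
      ∑ e ∈ S.1.attach,
        if h : IsConn ends (S.1.erase e.1) then
          ((-1 : ℤ) ^ nuEdge e.1 S.1) •
            Finsupp.single
              (⟨S.1.erase e.1, by simp [Finset.card_erase_of_mem e.2, S.2.1], h⟩ :
                ConnSub ends i) 1
        else 0 := by
  simp [bdry, Finsupp.lsum_apply, Finsupp.sum_single_index]

lemma hmt_single [DecidableEq E] [LinearOrder E] (ends : E → Sym2 V) (e₀ : E) (i : ℕ)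
    (S : ConnSub ends i) :
    hmt ends e₀ i (Finsupp.single S 1) =
      if h : e₀ ∉ S.1 then
        ((-1 : ℤ) ^ nuEdge e₀ S.1) •
          Finsupp.single
            (⟨insert e₀ S.1, by
                simp [Finset.card_insert_of_notMem h, S.2.1],
              isConn_mono (Finset.subset_insert _ _) S.2.2⟩ : ConnSub ends (i + 1)) 1
      else 0 := by
  simp [hmt, Finsupp.lsum_apply, Finsupp.sum_single_index]

lemma single_eq_of_eq {ends : E → Sym2 V} {i : ℕ} {A B : ConnSub ends i} (h : A.1 = B.1) :
    Finsupp.single A (1 : ℤ) = Finsupp.single B 1 := by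
  congr 1
  exact Subtype.ext h

lemma neg_one_sq_smul {n : ℕ} (x : CConn (V := V) (E := E) ends i) :
    ((-1 : ℤ) ^ n) • (((-1 : ℤ) ^ n) • x) = x := by
  rw [smul_smul, ← pow_add, Even.neg_one_pow ⟨n, rfl⟩, one_smul]

lemma homotopy_id0 [DecidableEq E] [LinearOrder E] (ends : E → Sym2 V) (e₀ : E)
    (S : ConnSub ends 0) :
    bdry ends 0 (hmt ends e₀ 0 (Finsupp.single S 1)) = Finsupp.single S 1 := by
  have hS : S.1 = ∅ := Finset.card_eq_zero.1 S.2.1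
  have h0 : e₀ ∉ S.1 := by rw [hS]; simp
  rw [hmt_single, dif_pos h0, map_smul, bdry_single]
  have he₀T : e₀ ∈ insert e₀ S.1 := Finset.mem_insert_self _ _
  rw [Finset.sum_eq_single_of_mem (⟨e₀, he₀T⟩ : {x // x ∈ insert e₀ S.1})
    (Finset.mem_attach _ _)]
  · have herase : (insert e₀ S.1).erase e₀ = S.1 := Finset.erase_insert h0
    have hc : IsConn ends ((insert e₀ S.1).erase e₀) := by rw [herase]; exact S.2.2
    rw [dif_pos hc, single_eq_of_eq herase]
    show ((-1 : ℤ) ^ nuEdge e₀ S.1) •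
        (((-1 : ℤ) ^ nuEdge e₀ (insert e₀ S.1)) • Finsupp.single S (1 : ℤ)) =
      Finsupp.single S 1
    rw [nuEdge_insert_self, neg_one_sq_smul]
  · intro b _ hb
    exfalso
    apply hb
    apply Subtype.ext
    have hbm : b.1 ∈ insert e₀ S.1 := b.2
    simp only [Finset.mem_insert] at hbm
    show b.1 = e₀
    rcases hbm with h | h
    · exact h
    · simp [hS] at h

lemma smul_smul_single {ends : E → Sym2 V} {i : ℕ} {A B : ConnSub ends i} {c d : ℤ}
    (h : A.1 = B.1) (hcd : c * d = 1) :
    c • (d • Finsupp.single A (1 : ℤ)) = Finsupp.single B 1 := by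
  rw [smul_smul, hcd, one_smul, single_eq_of_eq h]

lemma smul_smul_single_neg {ends : E → Sym2 V} {i : ℕ} {A B : ConnSub ends i} {c d c' d' : ℤ}
    (h : A.1 = B.1) (hs : c * d = -(c' * d')) :
    c • (d • Finsupp.single A (1 : ℤ)) = -(c' • (d' • Finsupp.single B (1 : ℤ))) := by
  rw [smul_smul, smul_smul, ← neg_smul, hs, single_eq_of_eq h]

lemma neg_one_pow_mul_self (n : ℕ) : ((-1 : ℤ) ^ n) * ((-1 : ℤ) ^ n) = 1 := by
  rw [← pow_add]
  exact Even.neg_one_pow ⟨n, rfl⟩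

lemma homotopy_id [DecidableEq E] [LinearOrder E] (ends : E → Sym2 V) (e₀ : E)
    (hloop : (ends e₀).IsDiag) (i : ℕ) (S : ConnSub ends (i + 1)) :
    bdry ends (i + 1) (hmt ends e₀ (i + 1) (Finsupp.single S 1)) +
      hmt ends e₀ i (bdry ends i (Finsupp.single S 1)) = Finsupp.single S 1 := by
  by_cases h0 : e₀ ∈ S.1
  · -- the loop already belongs to S
    rw [hmt_single, dif_neg (not_not_intro h0), map_zero, zero_add, bdry_single, map_sum]
    rw [Finset.sum_eq_single_of_mem (⟨e₀, h0⟩ : {x // x ∈ S.1}) (Finset.mem_attach _ _)]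
    · have hc : IsConn ends (S.1.erase e₀) := isConn_erase_loop hloop S.2.2
      rw [dif_pos hc, map_smul, hmt_single, dif_pos (Finset.notMem_erase e₀ S.1)]
      exact smul_smul_single (Finset.insert_erase h0)
        (by rw [nuEdge_erase_self]; exact neg_one_pow_mul_self _)
    · intro b _ hb
      have hbne : e₀ ≠ b.1 := fun hc => hb (Subtype.ext hc.symm)
      by_cases hc : IsConn ends (S.1.erase b.1)
      · rw [dif_pos hc, map_smul, hmt_single,
          dif_neg (not_not_intro (Finset.mem_erase.2 ⟨hbne, h0⟩)), smul_zero]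
      · rw [dif_neg hc, map_zero]
  · -- the loop is not in S
    rw [hmt_single, dif_pos h0, map_smul, bdry_single, bdry_single, map_sum]
    have he₀T : e₀ ∈ insert e₀ S.1 := Finset.mem_insert_self _ _
    rw [← Finset.add_sum_erase _ _
      (Finset.mem_attach _ (⟨e₀, he₀T⟩ : {x // x ∈ insert e₀ S.1})), smul_add]
    have hcS : IsConn ends ((insert e₀ S.1).erase e₀) := by
      rw [Finset.erase_insert h0]; exact S.2.2
    have h1 :
        ((-1 : ℤ) ^ nuEdge e₀ S.1) •
          (if h : IsConn ends ((insert e₀ S.1).erase e₀) then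
            ((-1 : ℤ) ^ nuEdge e₀ (insert e₀ S.1)) •
              Finsupp.single
                (⟨(insert e₀ S.1).erase e₀, by
                    rw [Finset.erase_insert h0]; exact ⟨S.2.1, S.2.2⟩⟩ :
                  ConnSub ends (i + 1)) (1 : ℤ)
          else (0 : CConn ends (i + 1))) = Finsupp.single S 1 := by
      rw [dif_pos hcS]
      exact smul_smul_single (Finset.erase_insert h0)
        (by rw [nuEdge_insert_self]; exact neg_one_pow_mul_self _)
    have h2 :
        ((-1 : ℤ) ^ nuEdge e₀ S.1) •
          ∑ f ∈ (insert e₀ S.1).attach.erase ⟨e₀, he₀T⟩,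
            (if h : IsConn ends ((insert e₀ S.1).erase f.1) then
              ((-1 : ℤ) ^ nuEdge f.1 (insert e₀ S.1)) •
                Finsupp.single
                  (⟨(insert e₀ S.1).erase f.1, by
                      simp [Finset.card_erase_of_mem f.2,
                        Finset.card_insert_of_notMem h0, S.2.1], h⟩ :
                    ConnSub ends (i + 1)) (1 : ℤ)
            else 0) =
        -∑ e ∈ S.1.attach,
            hmt ends e₀ i
              (if h : IsConn ends (S.1.erase e.1) then
                ((-1 : ℤ) ^ nuEdge e.1 S.1) •
                  Finsupp.single
                    (⟨S.1.erase e.1, by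
                        simp [Finset.card_erase_of_mem e.2, S.2.1], h⟩ :
                      ConnSub ends i) (1 : ℤ)
              else 0) := by
      rw [Finset.smul_sum, ← Finset.sum_neg_distrib]
      refine Finset.sum_bij'
        (fun f hf => (⟨f.1, by
          rcases Finset.mem_insert.1 f.2 with h | h
          · exact absurd (Subtype.ext h) (Finset.ne_of_mem_erase hf)
          · exact h⟩ : {x // x ∈ S.1}))
        (fun e _ => (⟨⟨e.1, Finset.mem_insert_of_mem e.2⟩, Finset.mem_erase.2
          ⟨fun hc => h0 ((show e.1 = e₀ from congrArg Subtype.val hc) ▸ e.2), Finset.mem_attach _ _⟩⟩ :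
            {x // x ∈ (insert e₀ S.1).attach.erase ⟨e₀, he₀T⟩}).1)
        (fun _ _ => Finset.mem_attach _ _)
        (fun e he => Finset.mem_erase.2
          ⟨fun hc => h0 ((show e.1 = e₀ from congrArg Subtype.val hc) ▸ e.2), Finset.mem_attach _ _⟩)
        (fun f hf => Subtype.ext rfl)
        (fun e he => Subtype.ext rfl)
        ?_
      intro f hf
      have hne : f.1 ≠ e₀ := fun hc => (Finset.ne_of_mem_erase hf) (Subtype.ext hc)
      have hfS : f.1 ∈ S.1 := by
        rcases Finset.mem_insert.1 f.2 with h | h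
        · exact absurd h hne
        · exact h
      have hTe : (insert e₀ S.1).erase f.1 = insert e₀ (S.1.erase f.1) :=
        Finset.erase_insert_of_ne (Ne.symm hne)
      have hc_iff : IsConn ends ((insert e₀ S.1).erase f.1) ↔ IsConn ends (S.1.erase f.1) := by
        rw [hTe]; exact isConn_insert_loop_iff hloop
      by_cases hc : IsConn ends (S.1.erase f.1)
      · rw [dif_pos (hc_iff.2 hc), dif_pos hc, map_smul, hmt_single,
          dif_pos (show e₀ ∉ S.1.erase f.1 from fun hm => h0 (Finset.mem_of_mem_erase hm))]
        exact smul_smul_single_neg hTe (sign_key hfS h0 hne)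
      · rw [dif_neg (fun hcT => hc (hc_iff.1 hcT)), dif_neg hc, map_zero, neg_zero, smul_zero]
    refine ((congrArg₂ (· + ·) (congrArg₂ (· + ·) h1 h2) rfl).trans ?_)
    rw [add_assoc, neg_add_cancel, add_zero]


section Main
variable [DecidableEq E] [LinearOrder E] (ends : E → Sym2 V) (e₀ : E)

lemma hid0 : (bdry ends 0) ∘ₗ (hmt ends e₀ 0) = LinearMap.id := by
  refine Finsupp.lhom_ext fun a b => ?_
  have hb : (Finsupp.single a b : CConn ends 0) = b • Finsupp.single a (1 : ℤ) := by
    rw [Finsupp.smul_single, smul_eq_mul, mul_one]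
  simp only [LinearMap.comp_apply, LinearMap.id_apply, hb, map_smul]
  rw [homotopy_id0 ends e₀ a]

lemma hid (hloop : (ends e₀).IsDiag) (i : ℕ) :
    (bdry ends (i + 1)) ∘ₗ (hmt ends e₀ (i + 1)) + (hmt ends e₀ i) ∘ₗ (bdry ends i) =
      LinearMap.id := by
  refine Finsupp.lhom_ext fun a b => ?_
  have hb : (Finsupp.single a b : CConn ends (i + 1)) = b • Finsupp.single a (1 : ℤ) := by
    rw [Finsupp.smul_single, smul_eq_mul, mul_one]
  simp only [LinearMap.add_apply, LinearMap.comp_apply, LinearMap.id_apply, hb, map_smul,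
    ← smul_add]
  rw [homotopy_id ends e₀ hloop i a]

end Main

theorem homology_trivial_of_loop
    [Fintype V] [DecidableEq V] [Fintype E] [LinearOrder E]
    (ends : E → Sym2 V) (hconn : IsConn ends (Finset.univ : Finset E))
    (e₀ : E) (hloop : (ends e₀).IsDiag) :
    Subsingleton (ConnH0 ends) ∧ ∀ i : ℕ, Subsingleton (ConnH ends i) := by
  constructor
  · refine Submodule.Quotient.subsingleton_iff.2 ?_
    rw [LinearMap.range_eq_top]
    intro x
    exact ⟨hmt ends e₀ 0 x, LinearMap.congr_fun (hid0 ends e₀) x⟩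
  · intro i
    refine Submodule.Quotient.subsingleton_iff.2 ?_
    rw [Submodule.eq_top_iff']
    intro x
    rw [Submodule.mem_comap]
    refine ⟨hmt ends e₀ (i + 1) x.1, ?_⟩
    have hx := LinearMap.congr_fun (hid ends e₀ hloop i) x.1
    simp only [LinearMap.add_apply, LinearMap.comp_apply, LinearMap.id_apply] at hx
    have hker : bdry ends i x.1 = 0 := x.2
    rw [hker, map_zero, add_zero] at hx
    exact hx


end
end

section
/- Let Γ be a multigraph and let e be an edge of Γ that is not a loop and is the largest edge in the fixed linear order on E. Then there is a short exact sequence of chain complexes 0 → C_conn(Γ∖e) →α C_conn(Γ) →β C_conn(Γ/e) → 0, where: α sends a connected subgraph S ⊆ E∖{e} of Γ∖e of cardinality i to the same subset S viewed as a connected subgraph of Γ (degree i to degree i); β sends a connected subgraph S ⊆ E of Γ of cardinality i to the connected subgraph (S∖{e}) of Γ/e of cardinality i−1 if e ∈ S, and to 0 if e ∉ S. In particular α and β commute with the differentials, α is injective, β is surjective, and the image of α equals the kernel of β in every degree. -/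
/-!
Statement 12. Let `e` be a non-loop edge of a multigraph `Γ` which is largest in the fixed
linear order on the edges.  Then there is a short exact sequence of chain complexes
`0 → C_conn(Γ∖e) →α C_conn(Γ) →β C_conn(Γ/e) → 0`, where `α` includes a connected subgraph
of `Γ∖e` into `Γ` (degree `i` to degree `i`), and `β` sends a connected subgraph `S` of `Γ`
to `S∖{e}` in `Γ/e` if `e ∈ S` (degree `i` to degree `i − 1`) and to `0` otherwise:
`α` and `β` are chain maps, `α` is injective, `β` is surjective, and the image of `α`
equals the kernel of `β` in every degree.
-/

noncomputable section

open scoped Classical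

variable {V E : Type}

/-- The map identifying the two endpoints `a`, `b` of a contracted edge (`b ↦ a`). -/
def contractMap [DecidableEq V] (a b : V) (hab : a ≠ b) : V → {v : V // v ≠ b} :=
  fun v => if h : v = b then ⟨a, hab⟩ else ⟨v, h⟩

/-- The endpoint map of the contracted multigraph `Γ/e`. -/
def contractEnds [DecidableEq V] (ends : E → Sym2 V) (e : E) (a b : V) (hab : a ≠ b) :
    {f : E // f ≠ e} → Sym2 {v : V // v ≠ b} :=
  fun f => (ends f.1).map (contractMap a b hab)

set_option linter.unusedSectionVars false
set_option linter.unusedVariables false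

namespace DCAux

abbrev emb (e : E) : {f : E // f ≠ e} ↪ E := Function.Embedding.subtype _

lemma stepRel_symm {ends : E → Sym2 V} {S : Finset E} : Symmetric (StepRel ends S) := by
  rintro x y ⟨f, hf, h⟩
  exact ⟨f, hf, by rw [h, Sym2.eq_swap]⟩

lemma rtg_symm {ends : E → Sym2 V} {S : Finset E} {x y : V}
    (h : Relation.ReflTransGen (StepRel ends S) x y) :
    Relation.ReflTransGen (StepRel ends S) y x :=
  by haveI : Std.Symm (StepRel ends S) := ⟨fun _ _ hh => stepRel_symm hh⟩; exact Std.Symm.symm _ _ h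

lemma step_map {ends : E → Sym2 V} {e : E} {S : Finset {f : E // f ≠ e}} {x y : V} :
    StepRel (fun f : {f : E // f ≠ e} => ends f.1) S x y ↔ StepRel ends (S.map (emb e)) x y := by
  constructor
  · rintro ⟨g, hg, h⟩
    exact ⟨g.1, Finset.mem_map_of_mem _ hg, h⟩
  · rintro ⟨f, hf, h⟩
    obtain ⟨g, hg, rfl⟩ := Finset.mem_map.mp hf
    exact ⟨g, hg, h⟩

lemma isConn_map {ends : E → Sym2 V} {e : E} {S : Finset {f : E // f ≠ e}} :
    IsConn (fun f : {f : E // f ≠ e} => ends f.1) S ↔ IsConn ends (S.map (emb e)) := by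
  constructor <;> intro h x y
  · exact Relation.ReflTransGen.mono (fun _ _ => step_map.mp) _ _ (h x y)
  · exact Relation.ReflTransGen.mono (fun _ _ => step_map.mpr) _ _ (h x y)

variable [DecidableEq E] in
lemma map_subtype {e : E} {S : Finset E} (h : e ∉ S) :
    (S.subtype (· ≠ e)).map (emb e) = S := by
  rw [Finset.subtype_map, Finset.filter_true_of_mem]
  intro x hx
  exact fun hh => h (hh ▸ hx)

variable [DecidableEq E] in
lemma card_subtype_ne {e : E} {S : Finset E} (h : e ∉ S) :
    (S.subtype (· ≠ e)).card = S.card := by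
  rw [← Finset.card_map (emb e), map_subtype h]

lemma nuEdge_map [LinearOrder E] {e : E} (g : {f : E // f ≠ e}) (S : Finset {f : E // f ≠ e}) :
    nuEdge g.1 (S.map (emb e)) = nuEdge g S := by
  unfold nuEdge
  rw [← Finset.card_map (emb e)]
  congr 1
  ext x
  simp only [Finset.mem_map, Finset.mem_filter]
  constructor
  · rintro ⟨⟨y, hy, rfl⟩, hlt⟩
    exact ⟨y, ⟨hy, hlt⟩, rfl⟩
  · rintro ⟨y, ⟨hy, hlt⟩, rfl⟩
    exact ⟨⟨y, hy, rfl⟩, hlt⟩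

lemma nuEdge_erase_largest [LinearOrder E] {e f : E} (hlargest : ∀ g : E, g ≤ e)
    (S : Finset E) : nuEdge f (S.erase e) = nuEdge f S := by
  unfold nuEdge
  congr 1
  ext g
  simp only [Finset.mem_filter, Finset.mem_erase]
  constructor
  · rintro ⟨⟨_, h⟩, h2⟩; exact ⟨h, h2⟩
  · rintro ⟨h, h2⟩
    exact ⟨⟨fun hge => absurd (hge ▸ h2) (not_lt.mpr (hlargest f)), h⟩, h2⟩

variable [DecidableEq E] in
lemma subtype_erase {e : E} {S : Finset E} (g : {f : E // f ≠ e}) :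
    (S.subtype (· ≠ e)).erase g = (S.erase g.1).subtype (· ≠ e) := by
  ext x
  simp only [Finset.mem_erase, Finset.mem_subtype, ne_eq, Subtype.ext_iff]


section Contract
variable [DecidableEq V] [DecidableEq E] {ends : E → Sym2 V} {e : E} {a b : V} {hab : a ≠ b}

lemma contractMap_a : contractMap a b hab a = ⟨a, hab⟩ := by
  simp [contractMap, hab]

lemma contractMap_b : contractMap a b hab b = ⟨a, hab⟩ := by
  simp [contractMap]

lemma contractMap_val (v : {v : V // v ≠ b}) : contractMap a b hab v.1 = v := by
  simp [contractMap, v.2]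

lemma conn_contract (hends : ends e = s(a, b)) {S : Finset E} (he : e ∈ S) (hS : IsConn ends S) :
    IsConn (contractEnds ends e a b hab) ((S.erase e).subtype (· ≠ e)) := by
  intro x y
  have key : ∀ u v : V, Relation.ReflTransGen (StepRel ends S) u v →
      Relation.ReflTransGen
        (StepRel (contractEnds ends e a b hab) ((S.erase e).subtype (· ≠ e)))
        (contractMap a b hab u) (contractMap a b hab v) := by
    intro u v h
    induction h with
    | refl => exact .refl
    | @tail w v h1 h2 ih =>
      obtain ⟨f, hf, hends'⟩ := h2
      by_cases hfe : f = e
      · subst hfe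
        rw [hends] at hends'
        have : contractMap a b hab w = contractMap a b hab v := by
          rcases Sym2.eq_iff.mp hends' with ⟨rfl, rfl⟩ | ⟨rfl, rfl⟩ <;>
            simp [contractMap_a, contractMap_b]
        exact this ▸ ih
      · refine ih.tail ⟨⟨f, hfe⟩, Finset.mem_subtype.mpr (Finset.mem_erase.mpr ⟨hfe, hf⟩), ?_⟩
        show (ends f).map (contractMap a b hab) = _
        rw [hends', Sym2.map_pair_eq]
  have hx := contractMap_val (hab := hab) x
  have hy := contractMap_val (hab := hab) y
  have := key x.1 y.1 (hS x.1 y.1)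
  rwa [hx, hy] at this

lemma conn_uncontract (hends : ends e = s(a, b)) {T : Finset {f : E // f ≠ e}}
    (hT : IsConn (contractEnds ends e a b hab) T) :
    IsConn ends (insert e (T.map (emb e))) := by
  set S : Finset E := insert e (T.map (emb e)) with hSdef
  have heS : e ∈ S := Finset.mem_insert_self _ _
  have hcm : ∀ v : V,
      Relation.ReflTransGen (StepRel ends S) v (contractMap a b hab v).1 := by
    intro v
    by_cases hv : v = b
    · subst hv
      refine Relation.ReflTransGen.single ⟨e, heS, ?_⟩
      rw [hends, contractMap_b, Sym2.eq_swap]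
    · have hv' : (contractMap a b hab v).1 = v := by simp [contractMap, hv]
      rw [hv']
  have key : ∀ x y : {v : V // v ≠ b},
      Relation.ReflTransGen (StepRel (contractEnds ends e a b hab) T) x y →
      Relation.ReflTransGen (StepRel ends S) x.1 y.1 := by
    intro x y h
    induction h with
    | refl => exact .refl
    | @tail w y h1 h2 ih =>
      obtain ⟨g, hg, hends'⟩ := h2
      obtain ⟨⟨u, v⟩, huv⟩ := Quot.exists_rep (ends g.1)
      have huv' : ends g.1 = s(u, v) := huv.symm
      have hgS : g.1 ∈ S := Finset.mem_insert_of_mem (Finset.mem_map_of_mem _ hg)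
      have hstep : Relation.ReflTransGen (StepRel ends S) u v :=
        Relation.ReflTransGen.single ⟨g.1, hgS, huv'⟩
      rw [show contractEnds ends e a b hab g = (ends g.1).map (contractMap a b hab) from rfl,
        huv', Sym2.map_pair_eq] at hends'
      have trans3 : ∀ p q : V, contractMap a b hab p = w → contractMap a b hab q = y →
          Relation.ReflTransGen (StepRel ends S) p q →
          Relation.ReflTransGen (StepRel ends S) w.1 y.1 := by
        intro p q hp hq hpq
        have h1' : Relation.ReflTransGen (StepRel ends S) w.1 p := by
          rw [← hp]; exact rtg_symm (hcm p)
        have h2' : Relation.ReflTransGen (StepRel ends S) q y.1 := by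
          rw [← hq]; exact hcm q
        exact (h1'.trans hpq).trans h2'
      rcases Sym2.eq_iff.mp hends' with ⟨hu, hv⟩ | ⟨hu, hv⟩
      · exact ih.trans (trans3 u v hu hv hstep)
      · exact ih.trans (trans3 v u hv hu (rtg_symm hstep))
  intro p q
  have h1 := hcm p
  have h2 := hcm q
  exact (h1.trans (key _ _ (hT _ _))).trans (rtg_symm h2)

end Contract


section Dterm
variable [DecidableEq E] [LinearOrder E]

def Dterm (ends : E → Sym2 V) (i : ℕ) (S : ConnSub ends (i + 1)) (f : E) :
    CConn ends i :=
  if h : f ∈ S.1 ∧ IsConn ends (S.1.erase f) then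
    ((-1 : ℤ) ^ nuEdge f S.1) • Finsupp.single
      (⟨S.1.erase f, by simp [Finset.card_erase_of_mem h.1, S.2.1], h.2⟩ : ConnSub ends i) 1
  else 0

lemma bdry_single (ends : E → Sym2 V) (i : ℕ) (S : ConnSub ends (i + 1)) :
    bdry ends i (Finsupp.single S 1) = ∑ f ∈ S.1, Dterm ends i S f := by
  rw [show bdry ends i (Finsupp.single S 1) = _ from Finsupp.lsum_single _ _ _ _,
    LinearMap.toSpanSingleton_apply_one, ← Finset.sum_attach S.1 (Dterm ends i S)]
  refine Finset.sum_congr rfl fun x _ => ?_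
  by_cases hc : IsConn ends (S.1.erase x.1)
  · rw [dif_pos hc, Dterm, dif_pos ⟨x.2, hc⟩]
  · rw [dif_neg hc, Dterm, dif_neg (by simp [hc])]

end Dterm

section Maps
variable [DecidableEq V] [LinearOrder E]
variable (ends : E → Sym2 V) (e : E) (a b : V) (hab : a ≠ b)

/-- basis map for α -/
def iotaB (i : ℕ) (S : ConnSub (fun f : {f : E // f ≠ e} => ends f.1) i) : ConnSub ends i :=
  ⟨S.1.map (emb e), by rw [Finset.card_map]; exact S.2.1, isConn_map.mp S.2.2⟩

lemma iotaB_injective (i : ℕ) : Function.Injective (iotaB ends e i) := fun S T h =>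
  Subtype.ext (Finset.map_injective _ (congrArg Subtype.val h))

def alpha (i : ℕ) : CConn (fun f : {f : E // f ≠ e} => ends f.1) i →ₗ[ℤ] CConn ends i :=
  Finsupp.lmapDomain ℤ ℤ (iotaB ends e i)

lemma alpha_single (i : ℕ) (S : ConnSub (fun f : {f : E // f ≠ e} => ends f.1) i) (c : ℤ) :
    alpha ends e i (Finsupp.single S c) = Finsupp.single (iotaB ends e i S) c :=
  Finsupp.mapDomain_single

variable (hends : ends e = s(a, b))

/-- basis map for β -/
def conB (i : ℕ) (S : ConnSub ends (i + 1)) (h : e ∈ S.1) :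
    ConnSub (contractEnds ends e a b hab) i :=
  ⟨(S.1.erase e).subtype (· ≠ e), by
      rw [card_subtype_ne (Finset.notMem_erase _ _), Finset.card_erase_of_mem h, S.2.1]; rfl,
    conn_contract hends h S.2.2⟩

def betaB (i : ℕ) (S : ConnSub ends (i + 1)) : CConn (contractEnds ends e a b hab) i :=
  if h : e ∈ S.1 then Finsupp.single (conB ends e a b hab hends i S h) 1 else 0

def beta (i : ℕ) : CConn ends (i + 1) →ₗ[ℤ] CConn (contractEnds ends e a b hab) i :=
  Finsupp.lsum ℤ fun S : ConnSub ends (i + 1) =>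
    LinearMap.toSpanSingleton ℤ _ (betaB ends e a b hab hends i S)

lemma beta_single (i : ℕ) (S : ConnSub ends (i + 1)) (c : ℤ) :
    beta ends e a b hab hends i (Finsupp.single S c) = c • betaB ends e a b hab hends i S :=
  Finsupp.lsum_single _ _ _ _

/-- section of β on basis elements -/
def invB (i : ℕ) (T : ConnSub (contractEnds ends e a b hab) i) : ConnSub ends (i + 1) :=
  ⟨insert e (T.1.map (emb e)), by
      rw [Finset.card_insert_of_notMem (by simp), Finset.card_map, T.2.1],
    conn_uncontract hends T.2.2⟩

lemma mem_invB (i : ℕ) (T : ConnSub (contractEnds ends e a b hab) i) :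
    e ∈ (invB ends e a b hab hends i T).1 := Finset.mem_insert_self _ _

lemma conB_invB (i : ℕ) (T : ConnSub (contractEnds ends e a b hab) i) :
    conB ends e a b hab hends i (invB ends e a b hab hends i T)
      (mem_invB ends e a b hab hends i T) = T := by
  apply Subtype.ext
  show ((insert e (T.1.map (emb e))).erase e).subtype (· ≠ e) = T.1
  rw [Finset.erase_insert (by simp)]
  apply Finset.map_injective (emb e)
  rw [map_subtype (by simp)]

lemma invB_conB (i : ℕ) (S : ConnSub ends (i + 1)) (h : e ∈ S.1) :
    invB ends e a b hab hends i (conB ends e a b hab hends i S h) = S := by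
  apply Subtype.ext
  show insert e (((S.1.erase e).subtype (· ≠ e)).map (emb e)) = S.1
  rw [map_subtype (Finset.notMem_erase _ _), Finset.insert_erase h]

lemma betaB_apply (i : ℕ) (S : ConnSub ends (i + 1))
    (T : ConnSub (contractEnds ends e a b hab) i) :
    betaB ends e a b hab hends i S T =
      if S = invB ends e a b hab hends i T then 1 else 0 := by
  unfold betaB
  by_cases h : e ∈ S.1
  · rw [dif_pos h, Finsupp.single_apply]
    have hiff : (conB ends e a b hab hends i S h = T) ↔
        (S = invB ends e a b hab hends i T) :=
      ⟨fun hh => by rw [← hh, invB_conB],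
       fun hh => by subst hh; exact conB_invB ends e a b hab hends i T⟩
    exact if_congr hiff rfl rfl
  · rw [dif_neg h, if_neg (fun hh => h (by rw [hh]; exact mem_invB ends e a b hab hends i T))]
    rfl


lemma betaB_of_mem {i : ℕ} (S : ConnSub ends (i + 1)) (h : e ∈ S.1) :
    betaB ends e a b hab hends i S = Finsupp.single (conB ends e a b hab hends i S h) 1 :=
  dif_pos h

lemma betaB_of_not_mem {i : ℕ} (S : ConnSub ends (i + 1)) (h : e ∉ S.1) :
    betaB ends e a b hab hends i S = 0 :=
  dif_neg h

lemma beta_apply (i : ℕ) (x : CConn ends (i + 1))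
    (T : ConnSub (contractEnds ends e a b hab) i) :
    beta ends e a b hab hends i x T = x (invB ends e a b hab hends i T) := by
  induction x using Finsupp.induction_linear with
  | zero => simp
  | add f g hf hg => rw [map_add, Finsupp.add_apply, hf, hg, Finsupp.add_apply]
  | single S c =>
    rw [beta_single, Finsupp.smul_apply, betaB_apply, Finsupp.single_apply, smul_eq_mul]
    split_ifs <;> ring

lemma alpha_Dterm (i : ℕ) (S : ConnSub (fun f : {f : E // f ≠ e} => ends f.1) (i + 1))
    (g : {f : E // f ≠ e}) :
    alpha ends e i (Dterm (fun f : {f : E // f ≠ e} => ends f.1) i S g) =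
      Dterm ends i (iotaB ends e (i + 1) S) g.1 := by
  have herase : ((iotaB ends e (i + 1) S).1).erase g.1 = (S.1.erase g).map (emb e) := by
    show (S.1.map (emb e)).erase ((emb e) g) = _
    rw [Finset.map_erase]
  have hmem : g.1 ∈ (iotaB ends e (i + 1) S).1 ↔ g ∈ S.1 := Finset.mem_map' _
  have hconn : IsConn (fun f : {f : E // f ≠ e} => ends f.1) (S.1.erase g) ↔
      IsConn ends ((iotaB ends e (i + 1) S).1.erase g.1) := by
    rw [herase]; exact isConn_map
  unfold Dterm
  by_cases hh : g ∈ S.1 ∧ IsConn (fun f : {f : E // f ≠ e} => ends f.1) (S.1.erase g)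
  · rw [dif_pos hh, dif_pos ⟨hmem.mpr hh.1, hconn.mp hh.2⟩]
    erw [map_smul, alpha_single]
    have hsign : nuEdge g.1 (iotaB ends e (i + 1) S).1 = nuEdge g S.1 := nuEdge_map g S.1
    rw [hsign]
    congr 1
    apply congrArg (fun U => Finsupp.single U (1 : ℤ))
    exact Subtype.ext herase.symm
  · rw [dif_neg hh, dif_neg (fun hc => hh ⟨hmem.mp hc.1, hconn.mpr hc.2⟩), map_zero]

lemma alpha_chain (i : ℕ) :
    (bdry ends i).comp (alpha ends e (i + 1)) =
      (alpha ends e i).comp (bdry (fun f : {f : E // f ≠ e} => ends f.1) i) := by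
  apply Finsupp.lhom_ext
  intro S c
  have hc : (Finsupp.single S c) = c • Finsupp.single S (1 : ℤ) := by
    rw [Finsupp.smul_single, smul_eq_mul, mul_one]
  rw [LinearMap.comp_apply, LinearMap.comp_apply, hc, map_smul, map_smul, map_smul, map_smul]
  congr 1
  rw [alpha_single, bdry_single, bdry_single, map_sum]
  show ∑ f ∈ S.1.map (emb e), Dterm ends i (iotaB ends e (i + 1) S) f = _
  rw [Finset.sum_map]
  exact (Finset.sum_congr rfl fun g _ => (alpha_Dterm ends e i S g).symm)

lemma beta_Dterm_not_mem (i : ℕ) (S : ConnSub ends (i + 2)) (f : E)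
    (hf : e ∉ S.1.erase f) :
    beta ends e a b hab hends i (Dterm ends (i + 1) S f) = 0 := by
  unfold Dterm
  split_ifs with h
  · erw [map_smul, beta_single, one_smul,
      betaB_of_not_mem ends e a b hab hends _ hf, smul_zero]
  · exact map_zero _

lemma beta_Dterm_mem (hlargest : ∀ f : E, f ≤ e) (i : ℕ) (S : ConnSub ends (i + 2))
    (he : e ∈ S.1) (g : {f : E // f ≠ e})
    (hg : g ∈ (conB ends e a b hab hends (i + 1) S he).1) :
    Dterm (contractEnds ends e a b hab) i (conB ends e a b hab hends (i + 1) S he) g =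
      beta ends e a b hab hends i (Dterm ends (i + 1) S g.1) := by
  set T := conB ends e a b hab hends (i + 1) S he with hT
  have hg1 : g.1 ∈ S.1.erase e := Finset.mem_subtype.mp hg
  have hgS : g.1 ∈ S.1 := Finset.mem_of_mem_erase hg1
  have heg : e ∈ S.1.erase g.1 := Finset.mem_erase.mpr ⟨Ne.symm g.2, he⟩
  have hset : T.1.erase g = ((S.1.erase g.1).erase e).subtype (· ≠ e) := by
    show ((S.1.erase e).subtype (· ≠ e)).erase g = _
    rw [subtype_erase, Finset.erase_right_comm]
  have hTmap : T.1.map (emb e) = S.1.erase e :=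
    map_subtype (Finset.notMem_erase _ _)
  have hconn : IsConn ends (S.1.erase g.1) ↔
      IsConn (contractEnds ends e a b hab) (T.1.erase g) := by
    constructor
    · intro hcn
      rw [hset]
      exact conn_contract hends heg hcn
    · intro hcn
      have h2 := conn_uncontract hends hcn
      rwa [hset, map_subtype (Finset.notMem_erase _ _), Finset.insert_erase heg] at h2
  unfold Dterm
  by_cases hcn : IsConn ends (S.1.erase g.1)
  · rw [dif_pos ⟨hg, hconn.mp hcn⟩, dif_pos ⟨hgS, hcn⟩]
    erw [map_smul, beta_single, one_smul,
      betaB_of_mem ends e a b hab hends _ heg]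
    have hsign : nuEdge g T.1 = nuEdge g.1 S.1 := by
      rw [← nuEdge_map g T.1, hTmap, nuEdge_erase_largest hlargest]
    rw [hsign]
    congr 1
    apply congrArg (fun U => Finsupp.single U (1 : ℤ))
    exact Subtype.ext hset
  · rw [dif_neg (fun hx => hcn (hconn.mpr hx.2)), dif_neg (fun hx => hcn hx.2), map_zero]

lemma beta_chain (hlargest : ∀ f : E, f ≤ e) (i : ℕ) :
    (bdry (contractEnds ends e a b hab) i).comp (beta ends e a b hab hends (i + 1)) =
      (beta ends e a b hab hends i).comp (bdry ends (i + 1)) := by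
  apply Finsupp.lhom_ext
  intro S c
  have hc : (Finsupp.single S c) = c • Finsupp.single S (1 : ℤ) := by
    rw [Finsupp.smul_single, smul_eq_mul, mul_one]
  rw [LinearMap.comp_apply, LinearMap.comp_apply, hc, map_smul, map_smul, map_smul, map_smul]
  congr 1
  rw [beta_single, one_smul, bdry_single, map_sum]
  by_cases he : e ∈ S.1
  · rw [betaB_of_mem ends e a b hab hends S he, bdry_single,
      ← Finset.add_sum_erase _ _ he,
      beta_Dterm_not_mem ends e a b hab hends i S e (Finset.notMem_erase _ _), zero_add]
    have hTmap : (conB ends e a b hab hends (i + 1) S he).1.map (emb e) = S.1.erase e :=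
      map_subtype (Finset.notMem_erase _ _)
    rw [← hTmap, Finset.sum_map]
    exact Finset.sum_congr rfl fun g hg =>
      beta_Dterm_mem ends e a b hab hends hlargest i S he g hg
  · rw [betaB_of_not_mem ends e a b hab hends S he, map_zero]
    symm
    refine Finset.sum_eq_zero fun f hf => ?_
    exact beta_Dterm_not_mem ends e a b hab hends i S f
      (fun hx => he (Finset.mem_of_mem_erase hx))


lemma alpha_injective (i : ℕ) : Function.Injective (alpha ends e i) :=
  Finsupp.mapDomain_injective (iotaB_injective ends e i)

lemma invB_injective (i : ℕ) : Function.Injective (invB ends e a b hab hends i) := by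
  intro T1 T2 h
  have h1 : insert e (T1.1.map (emb e)) = insert e (T2.1.map (emb e)) :=
    congrArg Subtype.val h
  apply Subtype.ext
  apply Finset.map_injective (emb e)
  have h2 := congrArg (fun s => Finset.erase s e) h1
  simpa [Finset.erase_insert (show e ∉ T1.1.map (emb e) by simp),
    Finset.erase_insert (show e ∉ T2.1.map (emb e) by simp)] using h2

lemma beta_surjective (i : ℕ) : Function.Surjective (beta ends e a b hab hends i) := by
  intro y
  refine ⟨Finsupp.mapDomain (invB ends e a b hab hends i) y, ?_⟩
  ext T
  rw [beta_apply, Finsupp.mapDomain_apply (invB_injective ends e a b hab hends i)]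

lemma e_not_mem_iotaB (i : ℕ) (S : ConnSub (fun f : {f : E // f ≠ e} => ends f.1) i) :
    e ∉ (iotaB ends e i S).1 := by
  show e ∉ S.1.map (emb e)
  simp

def delB (i : ℕ) (S : ConnSub ends i) (h : e ∉ S.1) :
    ConnSub (fun f : {f : E // f ≠ e} => ends f.1) i :=
  ⟨S.1.subtype (· ≠ e), by rw [card_subtype_ne h]; exact S.2.1,
    isConn_map.mpr (by rw [map_subtype h]; exact S.2.2)⟩

lemma iotaB_delB (i : ℕ) (S : ConnSub ends i) (h : e ∉ S.1) :
    iotaB ends e i (delB ends e i S h) = S :=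
  Subtype.ext (map_subtype h)

set_option maxHeartbeats 1000000 in
lemma range_alpha_eq_ker_beta (i : ℕ) :
    LinearMap.range (alpha ends e (i + 1)) = LinearMap.ker (beta ends e a b hab hends i) := by
  apply le_antisymm
  · rintro _ ⟨x, rfl⟩
    rw [LinearMap.mem_ker]
    ext T
    rw [beta_apply]
    show Finsupp.mapDomain (iotaB ends e (i + 1)) x (invB ends e a b hab hends i T) = _
    rw [Finsupp.mapDomain_notin_range]
    · rfl
    · rintro ⟨S, hS⟩
      exact e_not_mem_iotaB ends e (i + 1) S
        (hS ▸ mem_invB ends e a b hab hends i T)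
  · intro x hx
    rw [LinearMap.mem_ker] at hx
    have hx' : ∀ S : ConnSub ends (i + 1), e ∈ S.1 → x S = 0 := by
      intro S he
      have h2 : beta ends e a b hab hends i x (conB ends e a b hab hends i S he) = 0 := by
        rw [hx]; rfl
      rw [beta_apply, invB_conB] at h2
      exact h2
    refine ⟨Finsupp.comapDomain (iotaB ends e (i + 1)) x
      (iotaB_injective ends e (i + 1)).injOn, ?_⟩
    show Finsupp.mapDomain (iotaB ends e (i + 1)) _ = x
    refine Finsupp.mapDomain_comapDomain _ (iotaB_injective ends e (i + 1)) x ?_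
    intro S hS
    rw [Finset.mem_coe, Finsupp.mem_support_iff] at hS
    by_cases he : e ∈ S.1
    · exact absurd (hx' S he) hS
    · exact ⟨delB ends e (i + 1) S he, iotaB_delB ends e (i + 1) S he⟩

include a b hab in
lemma isEmpty_connSub_zero : IsEmpty (ConnSub ends 0) := by
  constructor
  intro S
  have h := S.2.2 a b
  rw [Finset.card_eq_zero.mp S.2.1] at h
  have : a = b := by
    induction h with
    | refl => rfl
    | tail h1 h2 ih =>
      obtain ⟨f, hf, _⟩ := h2
      exact absurd hf (Finset.notMem_empty f)
  exact hab this

include a b hab in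
lemma range_alpha_zero : LinearMap.range (alpha ends e 0) = ⊤ := by
  rw [eq_top_iff]
  intro x _
  have hx : x = 0 := by
    ext S
    exact ((isEmpty_connSub_zero ends a b hab).false S).elim
  exact ⟨0, by rw [map_zero, hx]⟩

lemma alpha_coeff (i : ℕ) (S : ConnSub (fun f : {f : E // f ≠ e} => ends f.1) i)
    (T : ConnSub ends i) :
    alpha ends e i (Finsupp.single S 1) T =
      if T.1 = S.1.map (emb e) then 1 else 0 := by
  rw [alpha_single, Finsupp.single_apply]
  by_cases h2 : iotaB ends e i S = T
  · rw [if_pos h2, if_pos (by rw [← h2]; rfl)]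
  · rw [if_neg h2, if_neg (fun hx => h2 (Subtype.ext hx.symm))]

lemma beta_coeff (i : ℕ) (S : ConnSub ends (i + 1))
    (T : ConnSub (contractEnds ends e a b hab) i) :
    beta ends e a b hab hends i (Finsupp.single S 1) T =
      if e ∈ S.1 ∧ T.1.map (emb e) = S.1.erase e then 1 else 0 := by
  rw [beta_single, one_smul]
  by_cases h : e ∈ S.1
  · rw [betaB_of_mem ends e a b hab hends S h, Finsupp.single_apply]
    by_cases h2 : conB ends e a b hab hends i S h = T
    · rw [if_pos h2]
      rw [if_pos (show e ∈ S.1 ∧ T.1.map (emb e) = S.1.erase e from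
        ⟨h, by rw [← h2]; exact map_subtype (Finset.notMem_erase _ _)⟩)]
    · rw [if_neg h2, if_neg (show ¬(e ∈ S.1 ∧ T.1.map (emb e) = S.1.erase e) from
        fun hx => h2 (by
          apply Subtype.ext
          apply Finset.map_injective (emb e)
          rw [hx.2]
          exact map_subtype (Finset.notMem_erase e S.1)))]
  · rw [betaB_of_not_mem ends e a b hab hends S h, if_neg (fun hx => h hx.1)]
    rfl

end Maps

end DCAux

theorem deletion_contraction_short_exact_sequence
    [Fintype V] [DecidableEq V] [Fintype E] [LinearOrder E]
    (ends : E → Sym2 V) (e : E) (a b : V) (hab : a ≠ b) (hends : ends e = s(a, b))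
    (hlargest : ∀ f : E, f ≤ e) :
    ∃ (α : ∀ i : ℕ, CConn (fun f : {f : E // f ≠ e} => ends f.1) i →ₗ[ℤ] CConn ends i)
      (β : ∀ i : ℕ, CConn ends (i + 1) →ₗ[ℤ] CConn (contractEnds ends e a b hab) i),
      (∀ (i : ℕ) (S : ConnSub (fun f : {f : E // f ≠ e} => ends f.1) i) (T : ConnSub ends i),
        (α i (Finsupp.single S 1)) T =
          if T.1 = S.1.map (Function.Embedding.subtype fun f => f ≠ e) then 1 else 0) ∧
      (∀ (i : ℕ) (S : ConnSub ends (i + 1)) (T : ConnSub (contractEnds ends e a b hab) i),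
        (β i (Finsupp.single S 1)) T =
          if e ∈ S.1 ∧ T.1.map (Function.Embedding.subtype fun f => f ≠ e) = S.1.erase e
            then 1 else 0) ∧
      (∀ i : ℕ, Function.Injective (α i)) ∧
      (∀ i : ℕ, Function.Surjective (β i)) ∧
      (∀ i : ℕ, LinearMap.range (α (i + 1)) = LinearMap.ker (β i)) ∧
      LinearMap.range (α 0) = ⊤ ∧
      (∀ i : ℕ,
        (bdry ends i).comp (α (i + 1)) =
          (α i).comp (bdry (fun f : {f : E // f ≠ e} => ends f.1) i)) ∧
      (∀ i : ℕ,
        (bdry (contractEnds ends e a b hab) i).comp (β (i + 1)) =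
          (β i).comp (bdry ends (i + 1))) := by
  refine ⟨DCAux.alpha ends e, fun i => DCAux.beta ends e a b hab hends i,
    ?_, ?_, ?_, ?_, ?_, ?_, ?_, ?_⟩
  · exact fun i S T => DCAux.alpha_coeff ends e i S T
  · exact fun i S T => DCAux.beta_coeff ends e a b hab hends i S T
  · exact fun i => DCAux.alpha_injective ends e i
  · exact fun i => DCAux.beta_surjective ends e a b hab hends i
  · exact fun i => DCAux.range_alpha_eq_ker_beta ends e a b hab hends i
  · exact DCAux.range_alpha_zero ends e a b hab
  · exact fun i => DCAux.alpha_chain ends e i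
  · exact fun i => DCAux.beta_chain ends e a b hab hends hlargest i

end
end
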